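/- arXiv:1703.10011 — 8 statements merged into one kernel-verified Lean document; each statement's English description precedes it below -/
import Mathlib

section
/- Let T : H → H₁ be a densely defined closed linear operator between complex Hilbert spaces and let F₁ ⊆ H₁ be a closed subspace with R(T) ⊆ F₁. Then the following are equivalent: (i) R(T) is closed and R(T) = F₁; (ii) there exists a constant c > 0 such that ‖y‖ ≤ c‖T*y‖ for every y ∈ D(T*) ∩ F₁. -/
open LinearPMap

/-- The range of a `LinearPMap` as a set. -/
def LinearPMap.ranSet {R E F : Type*} [Ring R] [AddCommGroup E] [Module R E]
    [AddCommGroup F] [Module R F] (T : E →ₗ.[R] F) : Set F :=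
  Set.range fun x : T.domain => T x

noncomputable section AuxStmt1

variable {H H₁ : Type*} [NormedAddCommGroup H] [InnerProductSpace ℂ H] [CompleteSpace H]
    [NormedAddCommGroup H₁] [InnerProductSpace ℂ H₁] [CompleteSpace H₁]

local notation "⟪" x ", " y "⟫" => @inner ℂ _ _ x y

/-- If `⟪x₀, T† y⟫ = ⟪z, y⟫` for all `y` in the adjoint domain, then `(x₀, z)` lies in the
graph of the (closed) operator `T`. -/
private theorem key_mem_graph (T : H →ₗ.[ℂ] H₁) (hdense : Dense (T.domain : Set H))
    (hclosed : T.IsClosed) (x₀ : H) (z : H₁)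
    (h : ∀ y : T.adjoint.domain, ⟪x₀, T.adjoint y⟫ = ⟪z, (y : H₁)⟫) :
    (x₀, z) ∈ T.graph := by
  set e : WithLp 2 (H × H₁) ≃L[ℂ] H × H₁ := WithLp.prodContinuousLinearEquiv 2 ℂ H H₁ with he
  set G : Submodule ℂ (WithLp 2 (H × H₁)) :=
    T.graph.comap (e : WithLp 2 (H × H₁) →ₗ[ℂ] H × H₁) with hG
  have hGclosed : IsClosed (G : Set (WithLp 2 (H × H₁))) :=
    hclosed.preimage e.continuous
  have hGG : Gᗮᗮ = G := by
    rw [Submodule.orthogonal_orthogonal_eq_closure]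
    exact le_antisymm (Submodule.topologicalClosure_minimal G le_rfl hGclosed)
      (Submodule.le_topologicalClosure G)
  have hp : e.symm (x₀, z) ∈ Gᗮᗮ := by
    rw [Submodule.mem_orthogonal]
    intro q hq
    -- q ∈ Gᗮ : characterize
    set a := (e q).1 with ha
    set b := (e q).2 with hb
    have hq' : ∀ x : T.domain, ⟪a, (x : H)⟫ + ⟪b, T x⟫ = 0 := by
      intro x
      have hmem : e.symm ((x : H), T x) ∈ G := by
        simp only [hG, Submodule.mem_comap]
        have : (e : WithLp 2 (H × H₁) →ₗ[ℂ] H × H₁) (e.symm ((x : H), T x))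
            = ((x : H), T x) := e.apply_symm_apply _
        rw [this]
        exact T.mem_graph x
      have := (Submodule.mem_orthogonal' _ _).mp hq _ hmem
      rwa [WithLp.prod_inner_apply] at this
    have hbmem : b ∈ T.adjoint.domain := by
      apply mem_adjoint_domain_of_exists
      exact ⟨-a, fun x => by
        have := hq' x
        rw [inner_neg_left]
        linear_combination -this⟩
    have hTb : T.adjoint ⟨b, hbmem⟩ = -a := by
      apply adjoint_apply_eq hdense
      intro x
      have := hq' x
      rw [inner_neg_left]
      linear_combination -this
    -- now compute the inner product
    rw [WithLp.prod_inner_apply]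
    show ⟪a, x₀⟫ + ⟪b, z⟫ = 0
    have hx : ⟪x₀, T.adjoint ⟨b, hbmem⟩⟫ = ⟪z, b⟫ := h ⟨b, hbmem⟩
    rw [hTb, inner_neg_right] at hx
    have hx' := congrArg (starRingEnd ℂ) hx
    simp only [_root_.map_neg, inner_conj_symm] at hx'
    linear_combination -hx'
  rw [hGG] at hp
  have : (e : WithLp 2 (H × H₁) →ₗ[ℂ] H × H₁) (e.symm (x₀, z)) = (x₀, z) :=
    e.apply_symm_apply _
  simpa only [hG, Submodule.mem_comap, this] using hp

private theorem stmt1_fwd (T : H →ₗ.[ℂ] H₁) (hdense : Dense (T.domain : Set H)) (hclosed : T.IsClosed)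
    (F₁ : Submodule ℂ H₁) (hF₁ : IsClosed (F₁ : Set H₁))
    (hr : T.ranSet = (F₁ : Set H₁)) :
    ∃ c > (0 : ℝ), ∀ (y : H₁) (hy : y ∈ T.adjoint.domain), y ∈ F₁ →
        ‖y‖ ≤ c * ‖T.adjoint ⟨y, hy⟩‖ := by
  haveI : CompleteSpace T.graph := hclosed.completeSpace_coe
  haveI : CompleteSpace F₁ := hF₁.completeSpace_coe
  -- the projection from the graph onto F₁
  have hmem : ∀ g : T.graph, (g : H × H₁).2 ∈ F₁ := by
    intro g
    have := g.2
    rw [T.mem_graph_iff] at this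
    obtain ⟨x, -, hx2⟩ := this
    have : (g : H × H₁).2 ∈ T.ranSet := ⟨x, hx2⟩
    rw [hr] at this
    exact this
  set Φ₀ : T.graph →ₗ[ℂ] F₁ :=
    LinearMap.codRestrict F₁ ((LinearMap.snd ℂ H H₁) ∘ₗ T.graph.subtype) hmem with hΦ₀
  have hΦ₀bound : ∀ g : T.graph, ‖Φ₀ g‖ ≤ 1 * ‖g‖ := by
    intro g
    simp only [hΦ₀, LinearMap.codRestrict_apply, LinearMap.coe_comp, Function.comp_apply,
      Submodule.coe_subtype, LinearMap.snd_apply, one_mul]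
    calc ‖((g : H × H₁).2 : H₁)‖ ≤ ‖(g : H × H₁)‖ := norm_snd_le _
    _ = ‖g‖ := rfl
  set Φ : T.graph →L[ℂ] F₁ := LinearMap.mkContinuous Φ₀ 1 hΦ₀bound with hΦ
  have hsurj : Function.Surjective Φ := by
    intro u
    have : (u : H₁) ∈ T.ranSet := by rw [hr]; exact u.2
    obtain ⟨x, hx⟩ := this
    refine ⟨⟨((x : H), T x), T.mem_graph x⟩, ?_⟩
    apply Subtype.ext
    exact hx
  obtain ⟨C, hC, hCle⟩ := Φ.exists_preimage_norm_le hsurj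
  refine ⟨C, hC, ?_⟩
  intro y hy hyF
  obtain ⟨g, hg, hgle⟩ := hCle ⟨y, hyF⟩
  have hg2 : (g : H × H₁).2 = y := congrArg Subtype.val hg
  have hgm := g.2
  rw [T.mem_graph_iff] at hgm
  obtain ⟨x, hx1, hx2⟩ := hgm
  have hnormy : ‖(⟨y, hyF⟩ : F₁)‖ = ‖y‖ := rfl
  have hxle : ‖(x : H)‖ ≤ C * ‖y‖ := by
    calc ‖(x : H)‖ = ‖(g : H × H₁).1‖ := by rw [hx1]
    _ ≤ ‖(g : H × H₁)‖ := norm_fst_le _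
    _ = ‖g‖ := rfl
    _ ≤ C * ‖y‖ := by rw [← hnormy]; exact hgle
  have hinner : ⟪y, y⟫ = ⟪T.adjoint ⟨y, hy⟩, (x : H)⟫ := by
    have := adjoint_isFormalAdjoint hdense ⟨y, hy⟩ x
    rw [this, hx2, hg2]
  have hsq : ‖y‖ * ‖y‖ ≤ ‖T.adjoint ⟨y, hy⟩‖ * (C * ‖y‖) := by
    calc ‖y‖ * ‖y‖ = RCLike.re ⟪y, y⟫ := (inner_self_eq_norm_mul_norm y).symm
    _ ≤ ‖⟪y, y⟫‖ := RCLike.re_le_norm _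
    _ = ‖⟪T.adjoint ⟨y, hy⟩, (x : H)⟫‖ := by rw [hinner]
    _ ≤ ‖T.adjoint ⟨y, hy⟩‖ * ‖(x : H)‖ := norm_inner_le_norm _ _
    _ ≤ ‖T.adjoint ⟨y, hy⟩‖ * (C * ‖y‖) := by
        exact mul_le_mul_of_nonneg_left hxle (norm_nonneg _)
  rcases eq_or_lt_of_le (norm_nonneg y) with h0 | h0
  · rw [← h0]
    positivity
  · have := le_of_mul_le_mul_right (by linarith [hsq] : ‖y‖ * ‖y‖ ≤ C * ‖T.adjoint ⟨y, hy⟩‖ * ‖y‖) h0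
    linarith

private theorem stmt1_bwd (T : H →ₗ.[ℂ] H₁) (hdense : Dense (T.domain : Set H)) (hclosed : T.IsClosed)
    (F₁ : Submodule ℂ H₁) (hF₁ : IsClosed (F₁ : Set H₁))
    (hRF₁ : T.ranSet ⊆ (F₁ : Set H₁)) (c : ℝ) (hc : 0 < c)
    (h : ∀ (y : H₁) (hy : y ∈ T.adjoint.domain), y ∈ F₁ →
        ‖y‖ ≤ c * ‖T.adjoint ⟨y, hy⟩‖) :
    (F₁ : Set H₁) ⊆ T.ranSet := by
  intro z hz
  haveI : CompleteSpace F₁ := hF₁.completeSpace_coe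
  set D : Submodule ℂ H₁ := T.adjoint.domain ⊓ F₁ with hD
  set L : D →ₗ[ℂ] H :=
    T.adjoint.toFun ∘ₗ Submodule.inclusion (inf_le_left : D ≤ T.adjoint.domain) with hL
  have hLy : ∀ y : D, L y = T.adjoint ⟨(y : H₁), y.2.1⟩ := fun y => rfl
  have hLbound : ∀ y : D, ‖(y : H₁)‖ ≤ c * ‖L y‖ := by
    intro y
    rw [hLy]
    exact h y y.2.1 y.2.2
  have hinj : Function.Injective L := by
    intro y y' hyy'
    have : L (y - y') = 0 := by rw [_root_.map_sub, hyy', sub_self]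
    have hn := hLbound (y - y')
    rw [this, norm_zero, mul_zero] at hn
    have : ((y - y' : D) : H₁) = 0 := norm_le_zero_iff.mp hn
    have := sub_eq_zero.mp (by exact_mod_cast this : (y : H₁) - y' = 0)
    exact Subtype.ext this
  set eqv : D ≃ₗ[ℂ] LinearMap.range L := LinearEquiv.ofInjective L hinj with heqv
  have heqvL : ∀ y : D, ((eqv y : H)) = L y := fun y => rfl
  set φ₀ : LinearMap.range L →ₗ[ℂ] ℂ :=
    (innerSL ℂ z).toLinearMap ∘ₗ (D.subtype ∘ₗ eqv.symm.toLinearMap) with hφ₀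
  have hφ₀u : ∀ u : LinearMap.range L, φ₀ u = ⟪z, ((eqv.symm u : D) : H₁)⟫ := fun u => rfl
  have hφbound : ∀ u : LinearMap.range L, ‖φ₀ u‖ ≤ (c * ‖z‖) * ‖u‖ := by
    intro u
    rw [hφ₀u]
    have h1 : ‖⟪z, ((eqv.symm u : D) : H₁)⟫‖ ≤ ‖z‖ * ‖((eqv.symm u : D) : H₁)‖ :=
      norm_inner_le_norm _ _
    have h2 : ‖((eqv.symm u : D) : H₁)‖ ≤ c * ‖L (eqv.symm u)‖ := hLbound _
    have h3 : L (eqv.symm u) = (u : H) := by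
      rw [← heqvL, eqv.apply_symm_apply]
    rw [h3] at h2
    have : ‖(u : H)‖ = ‖u‖ := rfl
    rw [this] at h2
    calc ‖⟪z, ((eqv.symm u : D) : H₁)⟫‖ ≤ ‖z‖ * (c * ‖u‖) :=
          h1.trans (mul_le_mul_of_nonneg_left h2 (norm_nonneg _))
    _ = (c * ‖z‖) * ‖u‖ := by ring
  set φ : LinearMap.range L →L[ℂ] ℂ := LinearMap.mkContinuous φ₀ (c * ‖z‖) hφbound with hφ
  obtain ⟨ψ, hψ, -⟩ := exists_extension_norm_eq (LinearMap.range L) φ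
  set x₀ : H := (InnerProductSpace.toDual ℂ H).symm ψ with hx₀
  have hx₀inner : ∀ u : H, ⟪x₀, u⟫ = ψ u := fun u => InnerProductSpace.toDual_symm_apply
  -- main claim
  have hmain : ∀ y : T.adjoint.domain, ⟪x₀, T.adjoint y⟫ = ⟪z, (y : H₁)⟫ := by
    intro y
    set y₁ : H₁ := (Submodule.orthogonalProjectionOnto F₁ (y : H₁) : H₁) with hy₁
    set y₂ : H₁ := (y : H₁) - y₁ with hy₂
    have hy₂perp : y₂ ∈ F₁ᗮ := Submodule.sub_starProjection_mem_orthogonal (K := F₁) _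
    have h0 : ∀ x : T.domain, ⟪(0 : H), (x : H)⟫ = ⟪y₂, T x⟫ := by
      intro x
      have hTx : (T x) ∈ F₁ := hRF₁ ⟨x, rfl⟩
      have := ((Submodule.mem_orthogonal F₁ y₂).mp hy₂perp) _ hTx
      rw [inner_zero_left, ← inner_conj_symm, this, _root_.map_zero]
    have hy₂dom : y₂ ∈ T.adjoint.domain := mem_adjoint_domain_of_exists y₂ ⟨0, h0⟩
    have hTy₂ : T.adjoint ⟨y₂, hy₂dom⟩ = 0 := adjoint_apply_eq hdense ⟨y₂, hy₂dom⟩ h0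
    have hy₁dom : y₁ ∈ T.adjoint.domain := by
      have : y₁ = (y : H₁) - y₂ := by rw [hy₂]; abel
      rw [this]
      exact sub_mem y.2 hy₂dom
    have hy₁F : y₁ ∈ F₁ := Submodule.coe_mem _
    have hy₁D : y₁ ∈ D := ⟨hy₁dom, hy₁F⟩
    have hysum : y = (⟨y₁, hy₁dom⟩ : T.adjoint.domain) + ⟨y₂, hy₂dom⟩ := by
      apply Subtype.ext
      show (y : H₁) = y₁ + y₂
      rw [hy₂]; abel
    have hTy : T.adjoint y = T.adjoint ⟨y₁, hy₁dom⟩ := by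
      rw [hysum, T.adjoint.map_add, hTy₂, add_zero]
    have hu : T.adjoint ⟨y₁, hy₁dom⟩ = L ⟨y₁, hy₁D⟩ := rfl
    have humem : L ⟨y₁, hy₁D⟩ ∈ LinearMap.range L := LinearMap.mem_range_self L _
    have hψu : ψ (L ⟨y₁, hy₁D⟩) = φ ⟨L ⟨y₁, hy₁D⟩, humem⟩ := hψ ⟨L ⟨y₁, hy₁D⟩, humem⟩
    have hsymm : eqv.symm ⟨L ⟨y₁, hy₁D⟩, humem⟩ = ⟨y₁, hy₁D⟩ := by
      rw [LinearEquiv.symm_apply_eq]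
      apply Subtype.ext
      rw [heqvL]
    have hφu : φ ⟨L ⟨y₁, hy₁D⟩, humem⟩ = ⟪z, y₁⟫ := by
      show φ₀ _ = _
      rw [hφ₀u, hsymm]
    have hz2 : ⟪z, y₂⟫ = 0 := by
      have := ((Submodule.mem_orthogonal F₁ y₂).mp hy₂perp) _ hz
      exact this
    calc ⟪x₀, T.adjoint y⟫ = ψ (L ⟨y₁, hy₁D⟩) := by rw [hTy, hu, hx₀inner]
    _ = ⟪z, y₁⟫ := by rw [hψu, hφu]
    _ = ⟪z, (y : H₁)⟫ := by
        have : (y : H₁) = y₁ + y₂ := by rw [hy₂]; abel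
        rw [this, inner_add_right, hz2, add_zero]
  have := key_mem_graph T hdense hclosed x₀ z hmain
  rw [T.mem_graph_iff] at this
  obtain ⟨x, -, hx2⟩ := this
  exact ⟨x, hx2⟩

end AuxStmt1

/-- For a densely defined closed operator `T : H → H₁` and a closed subspace
`F₁ ⊇ R(T)`, the range of `T` is closed and equal to `F₁` iff there is `c > 0` with
`‖y‖ ≤ c * ‖T*y‖` for all `y ∈ D(T*) ∩ F₁`. -/
theorem stmt1 {H H₁ : Type*} [NormedAddCommGroup H] [InnerProductSpace ℂ H] [CompleteSpace H]
    [NormedAddCommGroup H₁] [InnerProductSpace ℂ H₁] [CompleteSpace H₁]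
    (T : H →ₗ.[ℂ] H₁) (hdense : Dense (T.domain : Set H)) (hclosed : T.IsClosed)
    (F₁ : Submodule ℂ H₁) (hF₁ : IsClosed (F₁ : Set H₁))
    (hRF₁ : T.ranSet ⊆ (F₁ : Set H₁)) :
    (IsClosed T.ranSet ∧ T.ranSet = (F₁ : Set H₁)) ↔
      ∃ c > (0 : ℝ), ∀ (y : H₁) (hy : y ∈ T.adjoint.domain), y ∈ F₁ →
        ‖y‖ ≤ c * ‖T.adjoint ⟨y, hy⟩‖ := by
  constructor
  · rintro ⟨-, hr⟩
    exact stmt1_fwd T hdense hclosed F₁ hF₁ hr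
  · rintro ⟨c, hc, h⟩
    have hsub := stmt1_bwd T hdense hclosed F₁ hF₁ hRF₁ c hc h
    have heq : T.ranSet = (F₁ : Set H₁) := Set.Subset.antisymm hRF₁ hsub
    exact ⟨heq ▸ hF₁, heq⟩
end

section
/- Let T : H → H₁ be a densely defined closed linear operator between complex Hilbert spaces and let F₁ ⊆ H₁ be a closed subspace with R(T) ⊆ F₁. Then the following are equivalent: (i) there exists c > 0 such that ‖y‖ ≤ c‖T*y‖ for every y ∈ D(T*) ∩ F₁; (ii) R(T*) is closed and the orthogonal complement of F₁ equals the kernel Z(T*). -/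
open LinearPMap

/-- The kernel of a `LinearPMap` as a set. -/
def LinearPMap.kerSet {R E F : Type*} [Ring R] [AddCommGroup E] [Module R E]
    [AddCommGroup F] [Module R F] (T : E →ₗ.[R] F) : Set E :=
  {x : E | ∃ hx : x ∈ T.domain, T ⟨x, hx⟩ = 0}

section Aux

variable {H H₁ : Type*} [NormedAddCommGroup H] [InnerProductSpace ℂ H] [CompleteSpace H]
    [NormedAddCommGroup H₁] [InnerProductSpace ℂ H₁] [CompleteSpace H₁]

local notation "⟪" x ", " y "⟫" => @inner ℂ _ _ x y

/-- The graph of the adjoint of a densely defined operator is closed. -/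
theorem aux_adjoint_graph_closed (T : H →ₗ.[ℂ] H₁) (hdense : Dense (T.domain : Set H)) :
    IsClosed (T.adjoint.graph : Set (H₁ × H)) := by
  have hset : (T.adjoint.graph : Set (H₁ × H)) =
      ⋂ u : T.domain, {p : H₁ × H | ⟪p.2, (u : H)⟫ = ⟪p.1, T u⟫} := by
    ext p
    simp only [Set.mem_iInter, Set.mem_setOf_eq, SetLike.mem_coe, mem_graph_iff]
    constructor
    · rintro ⟨y, h1, h2⟩ u
      rw [← h1, ← h2]
      exact (adjoint_isFormalAdjoint hdense y u)
    · intro h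
      have hy : p.1 ∈ T.adjoint.domain :=
        mem_adjoint_domain_of_exists _ ⟨p.2, fun u => h u⟩
      exact ⟨⟨p.1, hy⟩, rfl, adjoint_apply_eq hdense _ (fun u => h u)⟩
  rw [hset]
  exact isClosed_iInter fun u =>
    isClosed_eq (Continuous.inner continuous_snd continuous_const)
      (Continuous.inner continuous_fst continuous_const)

/-- Characterization of the kernel of the adjoint. -/
theorem aux_mem_ker_iff (T : H →ₗ.[ℂ] H₁) (hdense : Dense (T.domain : Set H)) (y : H₁) :
    y ∈ T.adjoint.kerSet ↔ ∀ u : T.domain, ⟪y, T u⟫ = 0 := by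
  constructor
  · rintro ⟨hy, h0⟩ u
    have := adjoint_isFormalAdjoint hdense ⟨y, hy⟩ u
    rw [h0] at this
    simpa using this.symm
  · intro h
    have hy : y ∈ T.adjoint.domain :=
      mem_adjoint_domain_of_exists y ⟨0, fun u => by simp [h u]⟩
    exact ⟨hy, adjoint_apply_eq hdense _ (fun u => by simp [h u])⟩

/-- `F₁ᗮ ⊆ Z(T*)` whenever `R(T) ⊆ F₁`. -/
theorem aux_orth_subset (T : H →ₗ.[ℂ] H₁) (hdense : Dense (T.domain : Set H))
    (F₁ : Submodule ℂ H₁) (hRF₁ : T.ranSet ⊆ (F₁ : Set H₁)) :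
    ((F₁ᗮ : Submodule ℂ H₁) : Set H₁) ⊆ T.adjoint.kerSet := by
  intro y hy
  rw [aux_mem_ker_iff T hdense]
  intro u
  have hTu : T u ∈ F₁ := hRF₁ ⟨u, rfl⟩
  have := (Submodule.mem_orthogonal F₁ y).mp hy (T u) hTu
  exact inner_eq_zero_symm.mpr this

/-- Decomposition: every `y ∈ D(T*)` can be replaced by `u ∈ D(T*) ∩ F₁` with the same
adjoint value, with `y - u ∈ F₁ᗮ`. -/
theorem aux_decomp (T : H →ₗ.[ℂ] H₁) (hdense : Dense (T.domain : Set H))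
    (F₁ : Submodule ℂ H₁) (hF₁ : IsClosed (F₁ : Set H₁))
    (hRF₁ : T.ranSet ⊆ (F₁ : Set H₁)) (y : H₁) (hy : y ∈ T.adjoint.domain) :
    ∃ (u : H₁) (hu : u ∈ T.adjoint.domain), u ∈ F₁ ∧
      T.adjoint ⟨u, hu⟩ = T.adjoint ⟨y, hy⟩ ∧ y - u ∈ F₁ᗮ := by
  haveI : CompleteSpace F₁ := hF₁.completeSpace_coe
  obtain ⟨u, huF, v, hvO, hyu⟩ := Submodule.exists_add_mem_mem_orthogonal (K := F₁) y
  obtain ⟨hvdom, hv0⟩ := aux_orth_subset T hdense F₁ hRF₁ hvO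
  have hu : u ∈ T.adjoint.domain := by
    have : u = y - v := by rw [hyu]; abel
    rw [this]; exact sub_mem hy hvdom
  refine ⟨u, hu, huF, ?_, ?_⟩
  · have heq : (⟨y, hy⟩ : T.adjoint.domain) = ⟨u, hu⟩ + ⟨v, hvdom⟩ := by
      ext; exact hyu
    rw [heq, LinearPMap.map_add, hv0, add_zero]
  · have : y - u = v := by rw [hyu]; abel
    rw [this]; exact hvO

end Aux

/-- For a densely defined closed operator `T : H → H₁` and a closed subspace
`F₁ ⊇ R(T)`: there exists `c > 0` with `‖y‖ ≤ c‖T*y‖` for every `y ∈ D(T*) ∩ F₁` iff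
`R(T*)` is closed and `F₁ᗮ = Z(T*)`. -/
theorem stmt2 {H H₁ : Type*} [NormedAddCommGroup H] [InnerProductSpace ℂ H] [CompleteSpace H]
    [NormedAddCommGroup H₁] [InnerProductSpace ℂ H₁] [CompleteSpace H₁]
    (T : H →ₗ.[ℂ] H₁) (hdense : Dense (T.domain : Set H)) (hclosed : T.IsClosed)
    (F₁ : Submodule ℂ H₁) (hF₁ : IsClosed (F₁ : Set H₁))
    (hRF₁ : T.ranSet ⊆ (F₁ : Set H₁)) :
    (∃ c > (0 : ℝ), ∀ (y : H₁) (hy : y ∈ T.adjoint.domain), y ∈ F₁ →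
        ‖y‖ ≤ c * ‖T.adjoint ⟨y, hy⟩‖) ↔
      (IsClosed T.adjoint.ranSet ∧ ((F₁ᗮ : Submodule ℂ H₁) : Set H₁) = T.adjoint.kerSet) := by
  constructor
  · rintro ⟨c, hc, hbound⟩
    have hsub2 : T.adjoint.kerSet ⊆ ((F₁ᗮ : Submodule ℂ H₁) : Set H₁) := by
      rintro y ⟨hy, hy0⟩
      obtain ⟨u, hu, huF, huT, hyu⟩ := aux_decomp T hdense F₁ hF₁ hRF₁ y hy
      have hu0 : T.adjoint ⟨u, hu⟩ = 0 := by rw [huT, hy0]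
      have hb := hbound u hu huF
      rw [hu0, norm_zero, mul_zero] at hb
      have : u = 0 := norm_le_zero_iff.mp hb
      have : y = y - u := by rw [this, sub_zero]
      rw [this]
      exact hyu
    constructor
    · -- closed range
      apply IsSeqClosed.isClosed
      intro zf z hzf hz
      have key : ∀ n : ℕ, ∃ (u : H₁) (hu : u ∈ T.adjoint.domain), u ∈ F₁ ∧
          T.adjoint ⟨u, hu⟩ = zf n := by
        intro n
        obtain ⟨x, hx⟩ := hzf n
        obtain ⟨u, hu, huF, huT, _⟩ := aux_decomp T hdense F₁ hF₁ hRF₁ x x.2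
        refine ⟨u, hu, huF, ?_⟩
        rw [huT, ← hx]
      choose u hu huF huz using key
      have hcu : CauchySeq u := by
        rw [Metric.cauchySeq_iff]
        intro ε hε
        obtain ⟨N, hN⟩ := Metric.cauchySeq_iff.mp hz.cauchySeq (ε / c) (by positivity)
        refine ⟨N, fun m hm n hn => ?_⟩
        have hsd : u m - u n ∈ T.adjoint.domain := sub_mem (hu m) (hu n)
        have hval : T.adjoint ⟨u m - u n, hsd⟩ = zf m - zf n := by
          have heq : (⟨u m - u n, hsd⟩ : T.adjoint.domain) = ⟨u m, hu m⟩ - ⟨u n, hu n⟩ := rfl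
          rw [heq, LinearPMap.map_sub, huz m, huz n]
        have hb := hbound (u m - u n) hsd (sub_mem (huF m) (huF n))
        rw [hval] at hb
        calc dist (u m) (u n) = ‖u m - u n‖ := dist_eq_norm _ _
          _ ≤ c * ‖zf m - zf n‖ := hb
          _ = c * dist (zf m) (zf n) := by rw [dist_eq_norm]
          _ < c * (ε / c) := by
              exact mul_lt_mul_of_pos_left (hN m hm n hn) hc
          _ = ε := mul_div_cancel₀ ε (ne_of_gt hc)
      obtain ⟨l, hl⟩ := cauchySeq_tendsto_of_complete hcu
      have hgraph : ∀ n, (u n, zf n) ∈ T.adjoint.graph := fun n => by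
        rw [mem_graph_iff]
        exact ⟨⟨u n, hu n⟩, rfl, huz n⟩
      have hmem : (l, z) ∈ (T.adjoint.graph : Set (H₁ × H)) :=
        (aux_adjoint_graph_closed T hdense).mem_of_tendsto (hl.prodMk_nhds hz)
          (Filter.Eventually.of_forall hgraph)
      rw [SetLike.mem_coe, mem_graph_iff] at hmem
      obtain ⟨w, _, hw2⟩ := hmem
      exact ⟨w, hw2⟩
    · exact Set.Subset.antisymm (aux_orth_subset T hdense F₁ hRF₁) hsub2
  · rintro ⟨hran, hker⟩
    -- uniqueness
    have huniq : ∀ (y y' : H₁) (hy : y ∈ T.adjoint.domain) (hy' : y' ∈ T.adjoint.domain),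
        y ∈ F₁ → y' ∈ F₁ → T.adjoint ⟨y, hy⟩ = T.adjoint ⟨y', hy'⟩ → y = y' := by
      intro y y' hy hy' hyF hy'F hval
      have hdm : y - y' ∈ T.adjoint.domain := sub_mem hy hy'
      have hsub0 : T.adjoint ⟨y - y', hdm⟩ = 0 := by
        have heq : (⟨y - y', hdm⟩ : T.adjoint.domain) = ⟨y, hy⟩ - ⟨y', hy'⟩ := rfl
        rw [heq, LinearPMap.map_sub, hval, sub_self]
      have hmem : y - y' ∈ T.adjoint.kerSet := ⟨hdm, hsub0⟩
      rw [← hker] at hmem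
      have hmemO : y - y' ∈ F₁ᗮ := hmem
      have hmemF : y - y' ∈ F₁ := sub_mem hyF hy'F
      have h0 : y - y' = 0 :=
        (Submodule.disjoint_def.mp F₁.orthogonal_disjoint) _ hmemF hmemO
      exact sub_eq_zero.mp h0
    set K : Submodule ℂ H := LinearMap.range T.adjoint.toFun with hK
    have hKset : (K : Set H) = T.adjoint.ranSet := LinearMap.coe_range _
    haveI : CompleteSpace K := (hKset ▸ hran).completeSpace_coe
    have hex : ∀ z : K, ∃ (y : H₁) (hy : y ∈ T.adjoint.domain), y ∈ F₁ ∧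
        T.adjoint ⟨y, hy⟩ = (z : H) := by
      rintro ⟨z, hz⟩
      obtain ⟨x, hx⟩ := hz
      obtain ⟨v, hv, hvF, hvT, _⟩ := aux_decomp T hdense F₁ hF₁ hRF₁ x x.2
      refine ⟨v, hv, hvF, ?_⟩
      rw [hvT]
      simpa using hx
    choose P hPdom hPF hPval using hex
    have gadd : ∀ z w : K, P (z + w) = P z + P w := by
      intro z w
      refine huniq _ _ (hPdom (z + w)) (add_mem (hPdom z) (hPdom w))
        (hPF (z + w)) (add_mem (hPF z) (hPF w)) ?_
      have heq : (⟨P z + P w, add_mem (hPdom z) (hPdom w)⟩ : T.adjoint.domain) =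
          ⟨P z, hPdom z⟩ + ⟨P w, hPdom w⟩ := rfl
      rw [hPval (z + w), heq, LinearPMap.map_add, hPval z, hPval w]
      rfl
    have gsmul : ∀ (a : ℂ) (z : K), P (a • z) = a • P z := by
      intro a z
      refine huniq _ _ (hPdom (a • z)) (Submodule.smul_mem _ a (hPdom z))
        (hPF (a • z)) (Submodule.smul_mem _ a (hPF z)) ?_
      have heq : (⟨a • P z, Submodule.smul_mem _ a (hPdom z)⟩ : T.adjoint.domain) =
          a • ⟨P z, hPdom z⟩ := rfl
      rw [hPval (a • z), heq, LinearPMap.map_smul, hPval z]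
      rfl
    let g : K →ₗ[ℂ] H₁ :=
      { toFun := P
        map_add' := gadd
        map_smul' := gsmul }
    have hgraphset : (g.graph : Set (K × H₁)) =
        ((fun p : K × H₁ => p.2) ⁻¹' (F₁ : Set H₁)) ∩
          ((fun p : K × H₁ => ((p.2, (p.1 : H)) : H₁ × H)) ⁻¹'
            (T.adjoint.graph : Set (H₁ × H))) := by
      ext p
      simp only [SetLike.mem_coe, LinearMap.mem_graph_iff, Set.mem_inter_iff,
        Set.mem_preimage, mem_graph_iff]
      constructor
      · intro hpg
        refine ⟨?_, ⟨⟨P p.1, hPdom p.1⟩, ?_, hPval p.1⟩⟩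
        · rw [hpg]; exact hPF p.1
        · rw [hpg]; rfl
      · rintro ⟨hpF, w, hw1, hw2⟩
        have hwd : p.2 ∈ T.adjoint.domain := hw1 ▸ w.2
        have hweq : (⟨p.2, hwd⟩ : T.adjoint.domain) = w := by ext; exact hw1.symm
        have : T.adjoint ⟨p.2, hwd⟩ = T.adjoint ⟨P p.1, hPdom p.1⟩ := by
          rw [hweq, hw2, hPval p.1]
        exact (huniq _ _ hwd (hPdom p.1) hpF (hPF p.1) this)
    have hgclosed : IsClosed (g.graph : Set (K × H₁)) := by
      rw [hgraphset]
      exact (hF₁.preimage continuous_snd).inter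
        ((aux_adjoint_graph_closed T hdense).preimage
          (continuous_snd.prodMk (continuous_subtype_val.comp continuous_fst)))
    have hcont : Continuous g := g.continuous_of_isClosed_graph hgclosed
    let G : K →L[ℂ] H₁ := ⟨g, hcont⟩
    refine ⟨‖G‖ + 1, by positivity, ?_⟩
    intro y hy hyF
    have hzmem : T.adjoint ⟨y, hy⟩ ∈ K := ⟨⟨y, hy⟩, rfl⟩
    set z : K := ⟨T.adjoint ⟨y, hy⟩, hzmem⟩ with hzdef
    have hyP : y = P z := huniq y (P z) hy (hPdom z) hyF (hPF z) (hPval z).symm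
    have hGz : G z = P z := rfl
    calc ‖y‖ = ‖G z‖ := by rw [hyP, hGz]
      _ ≤ ‖G‖ * ‖z‖ := G.le_opNorm z
      _ ≤ (‖G‖ + 1) * ‖z‖ :=
          mul_le_mul_of_nonneg_right (by linarith) (norm_nonneg _)
      _ = (‖G‖ + 1) * ‖T.adjoint ⟨y, hy⟩‖ := rfl
end

section
/- Let T : H → H₁ be a densely defined closed linear operator between complex Hilbert spaces and let F₁ ⊆ H₁ be a closed subspace with R(T) ⊆ F₁. Let S₁ denote the restriction of TT* to D(TT*) ∩ F₁ (which maps into F₁). Then the following are equivalent: (i) R(T) is closed and R(T) = F₁; (ii) S₁ is injective and R(S₁) is closed. -/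
open LinearPMap

set_option linter.unusedSectionVars false

noncomputable section

namespace Stmt3Aux

variable {H H₁ : Type*} [NormedAddCommGroup H] [InnerProductSpace ℂ H] [CompleteSpace H]
    [NormedAddCommGroup H₁] [InnerProductSpace ℂ H₁] [CompleteSpace H₁]

local notation "⟪" x ", " y "⟫" => @inner ℂ _ _ x y

theorem apply_congr {R E F : Type*} [CommRing R] [AddCommGroup E] [Module R E]
    [AddCommGroup F] [Module R F] (f : E →ₗ.[R] F) {a b : f.domain} (h : (a : E) = (b : E)) :
    f a = f b := congrArg (fun y => f y) (Subtype.ext h)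

variable (T : H →ₗ.[ℂ] H₁)

theorem mem_adjoint_graph_iff (hdense : Dense (T.domain : Set H)) (y : H₁) (u : H) :
    (y, u) ∈ T.adjoint.graph ↔ ∀ x : T.domain, ⟪u, (x : H)⟫ = ⟪y, T x⟫ := by
  constructor
  · intro h x
    rw [mem_graph_iff] at h
    obtain ⟨v, hv1, hv2⟩ := h
    simp only at hv1 hv2
    rw [← hv2, ← hv1]
    exact T.adjoint_isFormalAdjoint hdense v x
  · intro h
    have hy : y ∈ T.adjoint.domain := mem_adjoint_domain_of_exists y ⟨u, fun x => h x⟩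
    have happ : T.adjoint ⟨y, hy⟩ = u := adjoint_apply_eq hdense ⟨y, hy⟩ (fun x => h x)
    rw [mem_graph_iff]
    exact ⟨⟨y, hy⟩, rfl, happ⟩

theorem adjoint_isClosed (hdense : Dense (T.domain : Set H)) : T.adjoint.IsClosed := by
  have hset : (T.adjoint.graph : Set (H₁ × H)) =
      ⋂ x : T.domain, {p : H₁ × H | ⟪p.2, (x : H)⟫ - ⟪p.1, T x⟫ = 0} := by
    ext ⟨y, u⟩
    simp only [Set.mem_iInter, SetLike.mem_coe, Set.mem_setOf_eq, sub_eq_zero]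
    exact mem_adjoint_graph_iff T hdense y u
  show _root_.IsClosed (T.adjoint.graph : Set (H₁ × H))
  rw [hset]
  exact isClosed_iInter fun x => isClosed_eq
    (Continuous.sub (continuous_snd.inner continuous_const)
      (continuous_fst.inner continuous_const)) continuous_const

set_option linter.unusedSectionVars false

theorem fst_norm_le (x : WithLp 2 (H × H₁)) : ‖x.fst‖ ≤ ‖x‖ := by
  have h := WithLp.prod_norm_sq_eq_of_L2 x
  nlinarith [norm_nonneg x, norm_nonneg x.fst, norm_nonneg x.snd]

theorem snd_norm_le (x : WithLp 2 (H × H₁)) : ‖x.snd‖ ≤ ‖x‖ := by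
  have h := WithLp.prod_norm_sq_eq_of_L2 x
  nlinarith [norm_nonneg x, norm_nonneg x.fst, norm_nonneg x.snd]

/-- The graph of `T` as a submodule of the Hilbert space `WithLp 2 (H × H₁)`. -/
def graphL2 : Submodule ℂ (WithLp 2 (H × H₁)) :=
  T.graph.comap (WithLp.linearEquiv 2 ℂ (H × H₁) : WithLp 2 (H × H₁) →ₗ[ℂ] H × H₁)

theorem mem_graphL2 (g : WithLp 2 (H × H₁)) :
    g ∈ graphL2 T ↔ (g.fst, g.snd) ∈ T.graph := Iff.rfl

theorem graphL2_isClosed (hclosed : T.IsClosed) : IsClosed ((graphL2 T : Set (WithLp 2 (H × H₁)))) := by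
  have : (graphL2 T : Set (WithLp 2 (H × H₁))) =
      (WithLp.prodContinuousLinearEquiv 2 ℂ H H₁) ⁻¹' (T.graph : Set (H × H₁)) := rfl
  rw [this]
  exact hclosed.preimage (WithLp.prodContinuousLinearEquiv 2 ℂ H H₁).continuous

/-- von Neumann: `I + T T†` is surjective. -/
theorem vonNeumann (hdense : Dense (T.domain : Set H)) (hclosed : T.IsClosed) (z : H₁) :
    ∃ (v : H₁) (hv : v ∈ T.adjoint.domain) (hv2 : T.adjoint ⟨v, hv⟩ ∈ T.domain),
      z = v + T ⟨T.adjoint ⟨v, hv⟩, hv2⟩ := by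
  haveI : CompleteSpace (graphL2 T) := (graphL2_isClosed T hclosed).completeSpace_coe
  obtain ⟨g, hg, w, hw, hzw⟩ :=
    (graphL2 T).exists_add_mem_mem_orthogonal
      ((WithLp.equiv 2 (H × H₁)).symm ((0 : H), z))
  rw [mem_graphL2, mem_graph_iff] at hg
  obtain ⟨x, hx1, hx2⟩ := hg
  simp only at hx1 hx2
  -- components of the decomposition
  have hfst : (0 : H) = g.fst + w.fst := congrArg WithLp.fst hzw
  have hsnd : z = g.snd + w.snd := congrArg WithLp.snd hzw
  -- w is in the orthogonal complement of the graph
  have horth : ∀ x' : T.domain, ⟪w.snd, T x'⟫ = ⟪-w.fst, (x' : H)⟫ := by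
    intro x'
    have hmem : (WithLp.equiv 2 (H × H₁)).symm ((x' : H), T x') ∈ graphL2 T := by
      rw [mem_graphL2]
      exact T.mem_graph x'
    have h0 := (Submodule.mem_orthogonal _ w).mp hw _ hmem
    rw [WithLp.prod_inner_apply] at h0
    have h1 : ⟪(x' : H), w.fst⟫ + ⟪T x', w.snd⟫ = 0 := h0
    have h2 : ⟪T x', w.snd⟫ = ⟪-(x' : H), w.fst⟫ := by
      rw [inner_neg_left]; linear_combination h1
    calc ⟪w.snd, T x'⟫ = starRingEnd ℂ ⟪T x', w.snd⟫ := (inner_conj_symm _ _).symm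
      _ = starRingEnd ℂ ⟪-(x' : H), w.fst⟫ := by rw [h2]
      _ = ⟪w.fst, -(x' : H)⟫ := inner_conj_symm _ _
      _ = ⟪-w.fst, (x' : H)⟫ := by rw [inner_neg_left, inner_neg_right]
  have hgr : (w.snd, -w.fst) ∈ T.adjoint.graph := by
    rw [mem_adjoint_graph_iff T hdense]
    exact fun x' => (horth x').symm
  rw [mem_graph_iff] at hgr
  obtain ⟨v', hv1, hv2'⟩ := hgr
  simp only at hv1 hv2'
  have hv : w.snd ∈ T.adjoint.domain := hv1 ▸ v'.prop
  have hnegw : -w.fst = (x : H) := by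
    rw [hx1]
    have : g.fst = -w.fst := eq_neg_of_add_eq_zero_left hfst.symm
    rw [this]
  have key : T.adjoint ⟨w.snd, hv⟩ = (x : H) := by
    rw [← hnegw, ← hv2']
    exact apply_congr _ hv1.symm
  refine ⟨w.snd, hv, key ▸ x.prop, ?_⟩
  have : T ⟨T.adjoint ⟨w.snd, hv⟩, key ▸ x.prop⟩ = T x := apply_congr _ key
  rw [this, hx2, hsnd, add_comm]


/-- Open mapping bound: if the range of a closed operator is the closed subspace `F₁`,
then preimages can be chosen with controlled norm. -/
theorem exists_bound (hclosed : T.IsClosed) (F₁ : Submodule ℂ H₁)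
    (hF₁ : IsClosed (F₁ : Set H₁)) (hr : T.ranSet = (F₁ : Set H₁)) :
    ∃ C > (0 : ℝ), ∀ z ∈ F₁, ∃ x : T.domain, T x = z ∧ ‖(x : H)‖ ≤ C * ‖z‖ := by
  haveI : CompleteSpace (graphL2 T) := (graphL2_isClosed T hclosed).completeSpace_coe
  haveI : CompleteSpace F₁ := hF₁.completeSpace_coe
  have hmemF : ∀ g : graphL2 T, (g : WithLp 2 (H × H₁)).snd ∈ F₁ := by
    intro g
    have hg := g.prop
    rw [mem_graphL2, mem_graph_iff] at hg
    obtain ⟨x, _, hx2⟩ := hg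
    have hm : (g : WithLp 2 (H × H₁)).snd ∈ T.ranSet := ⟨x, hx2⟩
    rw [hr] at hm
    exact hm
  let φ₀ : graphL2 T →ₗ[ℂ] F₁ :=
    { toFun := fun g => ⟨(g : WithLp 2 (H × H₁)).snd, hmemF g⟩
      map_add' := fun g g' => rfl
      map_smul' := fun c g => rfl }
  have hφ₀ : ∀ g : graphL2 T, ‖φ₀ g‖ ≤ 1 * ‖g‖ := by
    intro g
    rw [one_mul]
    exact (snd_norm_le _).trans le_rfl
  let φ : graphL2 T →L[ℂ] F₁ := φ₀.mkContinuous 1 hφ₀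
  have hsurj : Function.Surjective φ := by
    intro z
    have hz : (z : H₁) ∈ T.ranSet := by rw [hr]; exact z.prop
    obtain ⟨x, hx⟩ := hz
    refine ⟨⟨(WithLp.equiv 2 (H × H₁)).symm ((x : H), T x), T.mem_graph x⟩, ?_⟩
    exact Subtype.ext hx
  obtain ⟨C, hC, hbd⟩ := φ.exists_preimage_norm_le hsurj
  refine ⟨C, hC, ?_⟩
  intro z hz
  obtain ⟨g, hg1, hg2⟩ := hbd ⟨z, hz⟩
  have hgg := g.prop
  rw [mem_graphL2, mem_graph_iff] at hgg
  obtain ⟨x, hx1, hx2⟩ := hgg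
  refine ⟨x, ?_, ?_⟩
  · rw [hx2]
    exact congrArg Subtype.val hg1
  · have h1 : ‖(x : H)‖ = ‖(g : WithLp 2 (H × H₁)).fst‖ := by rw [hx1]
    have h2 : ‖(⟨z, hz⟩ : F₁)‖ = ‖z‖ := rfl
    rw [h1, ← h2]
    exact (fst_norm_le _).trans hg2


/-- Coercivity: if `R(T) = F₁` (closed), then `S₁` is bounded below on `F₁ ∩ D(TT†)`. -/
theorem coercive (hdense : Dense (T.domain : Set H)) (hclosed : T.IsClosed)
    (F₁ : Submodule ℂ H₁) (hF₁ : IsClosed (F₁ : Set H₁)) (hr : T.ranSet = (F₁ : Set H₁)) :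
    ∃ C > (0 : ℝ), ∀ (y : H₁) (_ : y ∈ F₁) (hy : y ∈ T.adjoint.domain)
      (hTy : T.adjoint ⟨y, hy⟩ ∈ T.domain),
      ‖y‖ ≤ C ^ 2 * ‖T ⟨T.adjoint ⟨y, hy⟩, hTy⟩‖ ∧
      ‖T.adjoint ⟨y, hy⟩‖ ≤ C * ‖T ⟨T.adjoint ⟨y, hy⟩, hTy⟩‖ := by
  obtain ⟨C, hC, hbd⟩ := exists_bound T hclosed F₁ hF₁ hr
  refine ⟨C, hC, ?_⟩
  intro y hyF hy hTy
  -- step 1 : ‖y‖ ≤ C * ‖T† y‖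
  have step1 : ‖y‖ ≤ C * ‖T.adjoint ⟨y, hy⟩‖ := by
    obtain ⟨x, hx, hxn⟩ := hbd y hyF
    have hfa : ⟪T.adjoint ⟨y, hy⟩, (x : H)⟫ = ⟪y, T x⟫ :=
      T.adjoint_isFormalAdjoint hdense ⟨y, hy⟩ x
    rw [hx] at hfa
    have h1 : (‖y‖ : ℝ) ^ 2 = ‖⟪y, y⟫‖ := by
      rw [@inner_self_eq_norm_sq_to_K ℂ]
      simp
    have h2 : ‖⟪y, y⟫‖ ≤ ‖T.adjoint ⟨y, hy⟩‖ * ‖(x : H)‖ := by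
      rw [← hfa]; exact norm_inner_le_norm _ _
    have h3 : ‖y‖ ^ 2 ≤ ‖T.adjoint ⟨y, hy⟩‖ * (C * ‖y‖) := by
      rw [h1]
      exact h2.trans (by
        have := norm_nonneg (T.adjoint ⟨y, hy⟩)
        nlinarith)
    rcases eq_or_lt_of_le (norm_nonneg y) with h0 | h0
    · rw [← h0]; positivity
    · nlinarith
  -- step 2 : ‖T† y‖ ≤ C * ‖T (T† y)‖
  have step2 : ‖T.adjoint ⟨y, hy⟩‖ ≤ C * ‖T ⟨T.adjoint ⟨y, hy⟩, hTy⟩‖ := by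
    have hfa : ⟪T.adjoint ⟨y, hy⟩, T.adjoint ⟨y, hy⟩⟫ =
        ⟪y, T ⟨T.adjoint ⟨y, hy⟩, hTy⟩⟫ :=
      T.adjoint_isFormalAdjoint hdense ⟨y, hy⟩ ⟨T.adjoint ⟨y, hy⟩, hTy⟩
    have h1 : (‖T.adjoint ⟨y, hy⟩‖ : ℝ) ^ 2 = ‖⟪T.adjoint ⟨y, hy⟩, T.adjoint ⟨y, hy⟩⟫‖ := by
      rw [@inner_self_eq_norm_sq_to_K ℂ]
      simp
    have h2 : ‖⟪T.adjoint ⟨y, hy⟩, T.adjoint ⟨y, hy⟩⟫‖ ≤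
        ‖y‖ * ‖T ⟨T.adjoint ⟨y, hy⟩, hTy⟩‖ := by
      rw [hfa]; exact norm_inner_le_norm _ _
    have h3 : ‖T.adjoint ⟨y, hy⟩‖ ^ 2 ≤
        C * ‖T.adjoint ⟨y, hy⟩‖ * ‖T ⟨T.adjoint ⟨y, hy⟩, hTy⟩‖ := by
      rw [h1]
      refine h2.trans ?_
      have := norm_nonneg (T ⟨T.adjoint ⟨y, hy⟩, hTy⟩)
      nlinarith
    rcases eq_or_lt_of_le (norm_nonneg (T.adjoint ⟨y, hy⟩)) with h0 | h0
    · rw [← h0]; positivity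
    · nlinarith
  refine ⟨?_, step2⟩
  calc ‖y‖ ≤ C * ‖T.adjoint ⟨y, hy⟩‖ := step1
    _ ≤ C * (C * ‖T ⟨T.adjoint ⟨y, hy⟩, hTy⟩‖) := by
        exact mul_le_mul_of_nonneg_left step2 (le_of_lt hC)
    _ = C ^ 2 * ‖T ⟨T.adjoint ⟨y, hy⟩, hTy⟩‖ := by ring

/-- A sequence controlled by a Cauchy sequence is Cauchy. -/
theorem cauchySeq_of_dominated {X Y : Type*} [NormedAddCommGroup X] [NormedAddCommGroup Y]
    {w : ℕ → X} {y : ℕ → Y} {K : ℝ} (hK : 0 < K) (hw : CauchySeq w)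
    (h : ∀ m n, ‖y m - y n‖ ≤ K * ‖w m - w n‖) : CauchySeq y := by
  rw [Metric.cauchySeq_iff] at hw ⊢
  intro ε hε
  obtain ⟨N, hN⟩ := hw (ε / K) (by positivity)
  refine ⟨N, fun m hm n hn => ?_⟩
  have h1 := hN m hm n hn
  rw [dist_eq_norm] at h1 ⊢
  calc ‖y m - y n‖ ≤ K * ‖w m - w n‖ := h m n
    _ < K * (ε / K) := by exact mul_lt_mul_of_pos_left h1 hK
    _ = ε := by field_simp


theorem pmap_zero {R E F : Type*} [CommRing R] [AddCommGroup E] [Module R E]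
    [AddCommGroup F] [Module R F] (f : E →ₗ.[R] F) (h : (0 : E) ∈ f.domain) :
    f ⟨0, h⟩ = 0 := by
  have : (⟨0, h⟩ : f.domain) = 0 := rfl
  rw [this, f.map_zero]

theorem pmap_sub {R E F : Type*} [CommRing R] [AddCommGroup E] [Module R E]
    [AddCommGroup F] [Module R F] (f : E →ₗ.[R] F) {y z : E}
    (hy : y ∈ f.domain) (hz : z ∈ f.domain) (h : y - z ∈ f.domain) :
    f ⟨y - z, h⟩ = f ⟨y, hy⟩ - f ⟨z, hz⟩ := by
  have : (⟨y - z, h⟩ : f.domain) = ⟨y, hy⟩ - ⟨z, hz⟩ := rfl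
  rw [this, f.map_sub]

theorem pmap_add {R E F : Type*} [CommRing R] [AddCommGroup E] [Module R E]
    [AddCommGroup F] [Module R F] (f : E →ₗ.[R] F) {y z : E}
    (hy : y ∈ f.domain) (hz : z ∈ f.domain) (h : y + z ∈ f.domain) :
    f ⟨y + z, h⟩ = f ⟨y, hy⟩ + f ⟨z, hz⟩ := by
  have : (⟨y + z, h⟩ : f.domain) = ⟨y, hy⟩ + ⟨z, hz⟩ := rfl
  rw [this, f.map_add]

theorem pmap_smul {R E F : Type*} [CommRing R] [AddCommGroup E] [Module R E]
    [AddCommGroup F] [Module R F] (f : E →ₗ.[R] F) (c : R) {y : E}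
    (hy : y ∈ f.domain) (h : c • y ∈ f.domain) :
    f ⟨c • y, h⟩ = c • f ⟨y, hy⟩ := by
  have : (⟨c • y, h⟩ : f.domain) = c • (⟨y, hy⟩ : f.domain) := rfl
  rw [this, f.map_smul]

end Stmt3Aux





open Stmt3Aux in
/-- For a densely defined closed operator `T : H → H₁` and a closed subspace
`F₁ ⊇ R(T)`, with `S₁` the restriction of `TT*` to `D(TT*) ∩ F₁`:
`R(T)` is closed and equal to `F₁` iff `S₁` is injective and has closed range. -/
theorem stmt3 {H H₁ : Type*} [NormedAddCommGroup H] [InnerProductSpace ℂ H] [CompleteSpace H]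
    [NormedAddCommGroup H₁] [InnerProductSpace ℂ H₁] [CompleteSpace H₁]
    (T : H →ₗ.[ℂ] H₁) (hdense : Dense (T.domain : Set H)) (hclosed : T.IsClosed)
    (F₁ : Submodule ℂ H₁) (hF₁ : IsClosed (F₁ : Set H₁))
    (hRF₁ : T.ranSet ⊆ (F₁ : Set H₁)) :
    (IsClosed T.ranSet ∧ T.ranSet = (F₁ : Set H₁)) ↔
      ((∀ (y z : H₁), y ∈ F₁ → z ∈ F₁ →
          ∀ (hy : y ∈ T.adjoint.domain) (hz : z ∈ T.adjoint.domain)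
            (hTy : T.adjoint ⟨y, hy⟩ ∈ T.domain) (hTz : T.adjoint ⟨z, hz⟩ ∈ T.domain),
            T ⟨T.adjoint ⟨y, hy⟩, hTy⟩ = T ⟨T.adjoint ⟨z, hz⟩, hTz⟩ → y = z) ∧
        IsClosed {w : H₁ | ∃ (y : H₁) (_ : y ∈ F₁) (hy : y ∈ T.adjoint.domain)
          (hTy : T.adjoint ⟨y, hy⟩ ∈ T.domain), T ⟨T.adjoint ⟨y, hy⟩, hTy⟩ = w}) := by
  constructor
  · rintro ⟨hcl, hreq⟩
    obtain ⟨C, hC, hbd⟩ := coercive T hdense hclosed F₁ hF₁ hreq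
    constructor
    · -- injectivity
      intro y z hyF hzF hy hz hTy hTz heq
      have hd : y - z ∈ T.adjoint.domain := sub_mem hy hz
      have e1 : T.adjoint ⟨y - z, hd⟩ = T.adjoint ⟨y, hy⟩ - T.adjoint ⟨z, hz⟩ :=
        pmap_sub _ hy hz hd
      have hTd : T.adjoint ⟨y - z, hd⟩ ∈ T.domain := by rw [e1]; exact sub_mem hTy hTz
      have e2 : T ⟨T.adjoint ⟨y - z, hd⟩, hTd⟩ = 0 := by
        have h3 : T ⟨T.adjoint ⟨y - z, hd⟩, hTd⟩
            = T (⟨T.adjoint ⟨y, hy⟩, hTy⟩ - ⟨T.adjoint ⟨z, hz⟩, hTz⟩) :=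
          apply_congr _ (by simpa using e1)
        rw [h3, T.map_sub, heq, sub_self]
      have hb := (hbd (y - z) (sub_mem hyF hzF) hd hTd).1
      rw [e2, norm_zero, mul_zero] at hb
      have h0 : ‖y - z‖ = 0 := le_antisymm hb (norm_nonneg _)
      rw [norm_eq_zero, sub_eq_zero] at h0
      exact h0
    · -- closed range
      refine IsSeqClosed.isClosed ?_
      intro ws w hmem hlim
      choose yy hyF hyD hyT heq using hmem
      set uu : ℕ → H := fun n => T.adjoint ⟨yy n, hyD n⟩ with huu
      have hwc : CauchySeq ws := hlim.cauchySeq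
      have key : ∀ m n : ℕ, ∃ (hd : yy m - yy n ∈ T.adjoint.domain)
          (hTd : T.adjoint ⟨yy m - yy n, hd⟩ ∈ T.domain),
          T.adjoint ⟨yy m - yy n, hd⟩ = uu m - uu n ∧
          T ⟨T.adjoint ⟨yy m - yy n, hd⟩, hTd⟩ = ws m - ws n := by
        intro m n
        have hd : yy m - yy n ∈ T.adjoint.domain := sub_mem (hyD m) (hyD n)
        have e1 : T.adjoint ⟨yy m - yy n, hd⟩ = uu m - uu n :=
          pmap_sub _ (hyD m) (hyD n) hd
        have hTd : T.adjoint ⟨yy m - yy n, hd⟩ ∈ T.domain := by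
          rw [e1]; exact sub_mem (hyT m) (hyT n)
        refine ⟨hd, hTd, e1, ?_⟩
        have h3 : T ⟨T.adjoint ⟨yy m - yy n, hd⟩, hTd⟩
            = T (⟨uu m, hyT m⟩ - ⟨uu n, hyT n⟩) := apply_congr _ (by simpa using e1)
        rw [h3, T.map_sub, heq m, heq n]
      have hyc : CauchySeq yy := by
        refine cauchySeq_of_dominated (K := C ^ 2) (by positivity) hwc ?_
        intro m n
        obtain ⟨hd, hTd, e1, e2⟩ := key m n
        have hb := (hbd _ (sub_mem (hyF m) (hyF n)) hd hTd).1
        rwa [e2] at hb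
      have huc : CauchySeq uu := by
        refine cauchySeq_of_dominated (K := C) hC hwc ?_
        intro m n
        obtain ⟨hd, hTd, e1, e2⟩ := key m n
        have hb := (hbd _ (sub_mem (hyF m) (hyF n)) hd hTd).2
        rwa [e2, e1] at hb
      obtain ⟨y, hytend⟩ := cauchySeq_tendsto_of_complete hyc
      obtain ⟨u, hutend⟩ := cauchySeq_tendsto_of_complete huc
      have hyF' : y ∈ F₁ := hF₁.mem_of_tendsto hytend (Filter.Eventually.of_forall hyF)
      have hadjc : IsClosed (T.adjoint.graph : Set (H₁ × H)) := adjoint_isClosed T hdense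
      have hgc : IsClosed (T.graph : Set (H × H₁)) := hclosed
      have hyu : (y, u) ∈ T.adjoint.graph :=
        hadjc.mem_of_tendsto (hytend.prodMk_nhds hutend)
          (Filter.Eventually.of_forall fun n => T.adjoint.mem_graph ⟨yy n, hyD n⟩)
      have huw : (u, w) ∈ T.graph := by
        refine hgc.mem_of_tendsto (hutend.prodMk_nhds hlim)
          (Filter.Eventually.of_forall fun n => ?_)
        have hmg := T.mem_graph ⟨uu n, hyT n⟩
        rwa [heq n] at hmg
      rw [LinearPMap.mem_graph_iff] at hyu huw
      obtain ⟨v, hv1, hv2⟩ := hyu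
      obtain ⟨p, hp1, hp2⟩ := huw
      simp only at hv1 hv2 hp1 hp2
      have hy : y ∈ T.adjoint.domain := hv1 ▸ v.prop
      have e1 : T.adjoint ⟨y, hy⟩ = u := by rw [← hv2]; exact apply_congr _ hv1.symm
      have hTy : T.adjoint ⟨y, hy⟩ ∈ T.domain := by rw [e1, ← hp1]; exact p.prop
      refine ⟨y, hyF', hy, hTy, ?_⟩
      have h4 : T ⟨T.adjoint ⟨y, hy⟩, hTy⟩ = T p := apply_congr _ (e1.trans hp1.symm)
      rw [h4, hp2]
  · rintro ⟨hinj, hScl⟩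
    -- the range of `S₁` as a submodule
    set M : Submodule ℂ H₁ :=
      { carrier := {w : H₁ | ∃ (y : H₁) (_ : y ∈ F₁) (hy : y ∈ T.adjoint.domain)
          (hTy : T.adjoint ⟨y, hy⟩ ∈ T.domain), T ⟨T.adjoint ⟨y, hy⟩, hTy⟩ = w}
        zero_mem' := by
          have h0 : T.adjoint ⟨(0 : H₁), zero_mem _⟩ = 0 := pmap_zero _ _
          have hT0 : T.adjoint ⟨(0 : H₁), zero_mem _⟩ ∈ T.domain := by
            rw [h0]; exact zero_mem _
          exact ⟨0, zero_mem _, zero_mem _, hT0,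
            (apply_congr T h0).trans (pmap_zero T (zero_mem _))⟩
        add_mem' := by
          rintro a b ⟨y, hyF, hy, hTy, rfl⟩ ⟨z, hzF, hz, hTz, rfl⟩
          have e : T.adjoint ⟨y + z, add_mem hy hz⟩
              = T.adjoint ⟨y, hy⟩ + T.adjoint ⟨z, hz⟩ := pmap_add _ hy hz _
          have hT : T.adjoint ⟨y + z, add_mem hy hz⟩ ∈ T.domain := by
            rw [e]; exact add_mem hTy hTz
          refine ⟨y + z, add_mem hyF hzF, add_mem hy hz, hT, ?_⟩
          have h3 : T ⟨T.adjoint ⟨y + z, add_mem hy hz⟩, hT⟩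
              = T (⟨T.adjoint ⟨y, hy⟩, hTy⟩ + ⟨T.adjoint ⟨z, hz⟩, hTz⟩) :=
            apply_congr _ (by simpa using e)
          rw [h3, T.map_add]
        smul_mem' := by
          rintro c a ⟨y, hyF, hy, hTy, rfl⟩
          have e : T.adjoint ⟨c • y, Submodule.smul_mem _ c hy⟩
              = c • T.adjoint ⟨y, hy⟩ := pmap_smul _ c hy _
          have hT : T.adjoint ⟨c • y, Submodule.smul_mem _ c hy⟩ ∈ T.domain := by
            rw [e]; exact Submodule.smul_mem _ c hTy
          refine ⟨c • y, Submodule.smul_mem _ c hyF, Submodule.smul_mem _ c hy, hT, ?_⟩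
          have h3 : T ⟨T.adjoint ⟨c • y, Submodule.smul_mem _ c hy⟩, hT⟩
              = T (c • (⟨T.adjoint ⟨y, hy⟩, hTy⟩ : T.domain)) :=
            apply_congr _ (by simpa using e)
          rw [h3, T.map_smul] } with hM
    have hMc : IsClosed (M : Set H₁) := hScl
    haveI : CompleteSpace M := hMc.completeSpace_coe
    have hMF : (M : Set H₁) ⊆ (F₁ : Set H₁) := by
      rintro a ⟨y, hyF, hy, hTy, rfl⟩
      exact hRF₁ ⟨_, rfl⟩
    have hMran : (M : Set H₁) ⊆ T.ranSet := by
      rintro a ⟨y, hyF, hy, hTy, rfl⟩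
      exact ⟨_, rfl⟩
    have hF₁M : ∀ z ∈ F₁, z ∈ M := by
      intro z hzF
      obtain ⟨r, hrM, w, hwO, hzrw⟩ := M.exists_add_mem_mem_orthogonal z
      suffices hw0 : w = 0 by rw [hzrw, hw0, add_zero]; exact hrM
      obtain ⟨v, hv, hv2, hvn⟩ := vonNeumann T hdense hclosed w
      set q := T ⟨T.adjoint ⟨v, hv⟩, hv2⟩ with hqdef
      have hqF : q ∈ F₁ := hRF₁ ⟨_, rfl⟩
      have hwF : w ∈ F₁ := by
        have hw' : w = z - r := eq_sub_of_add_eq' hzrw.symm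
        rw [hw']; exact sub_mem hzF (hMF hrM)
      have hvF : v ∈ F₁ := by
        have hv' : v = w - q := eq_sub_of_add_eq hvn.symm
        rw [hv']; exact sub_mem hwF hqF
      have hqM : q ∈ M := ⟨v, hvF, hv, hv2, rfl⟩
      have horth : (inner ℂ q w) = 0 := (Submodule.mem_orthogonal _ w).mp hwO q hqM
      have hfa : (inner ℂ (T.adjoint ⟨v, hv⟩) (T.adjoint ⟨v, hv⟩)) = inner ℂ v q :=
        T.adjoint_isFormalAdjoint hdense ⟨v, hv⟩ ⟨T.adjoint ⟨v, hv⟩, hv2⟩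
      have hqv : (inner ℂ q v) = ((‖T.adjoint ⟨v, hv⟩‖ : ℝ) : ℂ) ^ 2 := by
        have h1 : (inner ℂ v q) = ((‖T.adjoint ⟨v, hv⟩‖ : ℝ) : ℂ) ^ 2 := by
          rw [← hfa, @inner_self_eq_norm_sq_to_K ℂ]
          norm_cast
        calc (inner ℂ q v) = starRingEnd ℂ (inner ℂ v q) := (inner_conj_symm _ _).symm
          _ = _ := by rw [h1, ← Complex.ofReal_pow, Complex.conj_ofReal, Complex.ofReal_pow]
      have hqq : (inner ℂ q q) = ((‖q‖ : ℝ) : ℂ) ^ 2 := @inner_self_eq_norm_sq_to_K ℂ _ _ _ _ q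
      have hsum : ((‖T.adjoint ⟨v, hv⟩‖ : ℝ) : ℂ) ^ 2 + ((‖q‖ : ℝ) : ℂ) ^ 2 = 0 := by
        rw [hvn, inner_add_right, hqv, hqq] at horth
        exact horth
      have hreal : (‖T.adjoint ⟨v, hv⟩‖ : ℝ) ^ 2 + (‖q‖ : ℝ) ^ 2 = 0 := by
        exact_mod_cast hsum
      have hq0 : q = 0 := by
        have : ‖q‖ = 0 := by nlinarith [norm_nonneg q, norm_nonneg (T.adjoint ⟨v, hv⟩)]
        exact norm_eq_zero.mp this
      have hadj0 : T.adjoint ⟨v, hv⟩ = 0 := by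
        have : ‖T.adjoint ⟨v, hv⟩‖ = 0 := by
          nlinarith [norm_nonneg q, norm_nonneg (T.adjoint ⟨v, hv⟩)]
        exact norm_eq_zero.mp this
      have hwv : w = v := by rw [hvn, hq0, add_zero]
      have h0 : T.adjoint ⟨(0 : H₁), zero_mem _⟩ = 0 := pmap_zero _ _
      have hT0 : T.adjoint ⟨(0 : H₁), zero_mem _⟩ ∈ T.domain := by
        rw [h0]; exact zero_mem _
      have heq0 : T ⟨T.adjoint ⟨v, hv⟩, hv2⟩ = T ⟨T.adjoint ⟨0, zero_mem _⟩, hT0⟩ := by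
        rw [← hqdef, hq0, (apply_congr T h0).trans (pmap_zero T (zero_mem _))]
      have hv00 := hinj v 0 hvF (zero_mem _) hv (zero_mem _) hv2 hT0 heq0
      rw [hwv, hv00]
    have hr : T.ranSet = (F₁ : Set H₁) := by
      refine subset_antisymm hRF₁ ?_
      intro z hz
      exact hMran (hF₁M z hz)
    exact ⟨hr ▸ hF₁, hr⟩
end
end

section
/- Let T : H → H₁ be a densely defined closed linear operator between complex Hilbert spaces. If R(T) = R(TT*), then R(T) is closed. -/
set_option maxHeartbeats 1000000

open LinearPMap

/-- For a densely defined closed operator `T : H → H₁` between complex Hilbert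
spaces, if `R(T) = R(TT*)` then `R(T)` is closed. -/
theorem stmt6 {H H₁ : Type*} [NormedAddCommGroup H] [InnerProductSpace ℂ H] [CompleteSpace H]
    [NormedAddCommGroup H₁] [InnerProductSpace ℂ H₁] [CompleteSpace H₁]
    (T : H →ₗ.[ℂ] H₁) (hdense : Dense (T.domain : Set H)) (hclosed : T.IsClosed)
    (hran : T.ranSet = {w : H₁ | ∃ (y : H₁) (hy : y ∈ T.adjoint.domain)
      (hTy : T.adjoint ⟨y, hy⟩ ∈ T.domain), T ⟨T.adjoint ⟨y, hy⟩, hTy⟩ = w}) :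
    IsClosed T.ranSet := by
  classical
  -- the fundamental property of the adjoint
  have hadj : ∀ (y : T.adjoint.domain) (x : T.domain),
      (inner ℂ (T.adjoint y : H) (x : H) : ℂ) = inner ℂ (y : H₁) (T x) :=
    fun y x => adjoint_isFormalAdjoint hdense y x
  -- the graph of the adjoint is closed
  have hAclosed : IsClosed (T.adjoint.graph : Set (H₁ × H)) := by
    apply IsSeqClosed.isClosed
    intro f p hf hfp
    have h1 : Filter.Tendsto (fun n => (f n).1) Filter.atTop (nhds p.1) :=
      (continuous_fst.tendsto p).comp hfp
    have h2 : Filter.Tendsto (fun n => (f n).2) Filter.atTop (nhds p.2) :=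
      (continuous_snd.tendsto p).comp hfp
    have key : ∀ x : T.domain, (inner ℂ p.2 (x : H) : ℂ) = inner ℂ p.1 (T x) := by
      intro x
      have e : ∀ n, (inner ℂ (f n).2 (x : H) : ℂ) = inner ℂ (f n).1 (T x) := by
        intro n
        obtain ⟨y, hy1, hy2⟩ := (mem_graph_iff _).mp (hf n)
        rw [← hy1, ← hy2]
        exact hadj y x
      have t1 : Filter.Tendsto (fun n => (inner ℂ (f n).2 (x : H) : ℂ)) Filter.atTop
          (nhds (inner ℂ p.2 (x : H))) := h2.inner tendsto_const_nhds
      have t2 : Filter.Tendsto (fun n => (inner ℂ (f n).1 (T x) : ℂ)) Filter.atTop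
          (nhds (inner ℂ p.1 (T x))) := h1.inner tendsto_const_nhds
      exact tendsto_nhds_unique t1 (by simpa only [← e] using t2)
    have hy : p.1 ∈ T.adjoint.domain := mem_adjoint_domain_of_exists _ ⟨p.2, key⟩
    have hval : T.adjoint ⟨p.1, hy⟩ = p.2 := adjoint_apply_eq hdense _ key
    exact (mem_graph_iff _).mpr ⟨⟨p.1, hy⟩, rfl, hval⟩
  -- the auxiliary closed subspace V of (H × H₁) × (H₁ × H)
  set L : ((H × H₁) × (H₁ × H)) →L[ℂ] (H × H₁) :=
    ((ContinuousLinearMap.snd ℂ H₁ H).comp (ContinuousLinearMap.snd ℂ (H × H₁) (H₁ × H))).prod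
      ((ContinuousLinearMap.snd ℂ H H₁).comp (ContinuousLinearMap.fst ℂ (H × H₁) (H₁ × H)))
    with hL
  have hLapply : ∀ p : (H × H₁) × (H₁ × H), L p = (p.2.2, p.1.2) := fun p => rfl
  set P1 : ((H × H₁) × (H₁ × H)) →L[ℂ] (H × H₁) :=
    ContinuousLinearMap.fst ℂ (H × H₁) (H₁ × H) with hP1
  set P2 : ((H × H₁) × (H₁ × H)) →L[ℂ] (H₁ × H) :=
    ContinuousLinearMap.snd ℂ (H × H₁) (H₁ × H) with hP2
  set V : Submodule ℂ ((H × H₁) × (H₁ × H)) :=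
    (T.graph.comap (P1 : ((H × H₁) × (H₁ × H)) →ₗ[ℂ] (H × H₁)))
      ⊓ (T.adjoint.graph.comap (P2 : ((H × H₁) × (H₁ × H)) →ₗ[ℂ] (H₁ × H)))
      ⊓ (T.graph.comap (L : ((H × H₁) × (H₁ × H)) →ₗ[ℂ] (H × H₁))) with hV
  have hVmem : ∀ p : (H × H₁) × (H₁ × H), p ∈ V ↔
      p.1 ∈ T.graph ∧ p.2 ∈ T.adjoint.graph ∧ (p.2.2, p.1.2) ∈ T.graph := by
    intro p
    simp only [hV, Submodule.mem_inf, Submodule.mem_comap, ContinuousLinearMap.coe_coe]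
    constructor
    · rintro ⟨⟨a, b⟩, c⟩; exact ⟨a, b, c⟩
    · rintro ⟨a, b, c⟩; exact ⟨⟨a, b⟩, c⟩
  have hVclosed : IsClosed (V : Set ((H × H₁) × (H₁ × H))) := by
    have : (V : Set ((H × H₁) × (H₁ × H))) =
        (P1 ⁻¹' T.graph) ∩ (P2 ⁻¹' T.adjoint.graph) ∩ (L ⁻¹' T.graph) := by
      ext p
      simp only [SetLike.mem_coe, hVmem p, Set.mem_inter_iff, Set.mem_preimage]
      constructor
      · rintro ⟨a, b, c⟩; exact ⟨⟨a, b⟩, c⟩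
      · rintro ⟨⟨a, b⟩, c⟩; exact ⟨a, b, c⟩
    rw [this]
    exact ((hclosed.preimage P1.continuous).inter
      (hAclosed.preimage P2.continuous)).inter (hclosed.preimage L.continuous)
  haveI : CompleteSpace V := hVclosed.completeSpace_coe
  haveI : CompleteSpace T.graph := hclosed.completeSpace_coe
  -- the projection from V onto the graph of T
  set π : V →L[ℂ] T.graph :=
    (P1.comp V.subtypeL).codRestrict T.graph
      (fun v => ((hVmem v.1).mp v.2).1) with hπ
  have hπapply : ∀ v : V, (π v : H × H₁) = (v : (H × H₁) × (H₁ × H)).1 := fun v => rfl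
  have hsurj : Function.Surjective π := by
    rintro ⟨⟨x0, v0⟩, hg⟩
    obtain ⟨x, hx1, hx2⟩ := (mem_graph_iff _).mp hg
    have hv0 : v0 ∈ T.ranSet := ⟨x, hx2⟩
    rw [hran] at hv0
    obtain ⟨y, hy, hTy, hTTy⟩ := hv0
    refine ⟨⟨((x0, v0), (y, T.adjoint ⟨y, hy⟩)), ?_⟩, ?_⟩
    · refine (hVmem _).mpr ⟨hg, ?_, ?_⟩
      · exact mem_graph _ ⟨y, hy⟩
      · exact (mem_graph_iff _).mpr ⟨⟨_, hTy⟩, rfl, hTTy⟩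
    · exact Subtype.ext rfl
  obtain ⟨C, hC, hCle⟩ := π.exists_preimage_norm_le hsurj
  set K : ℝ := 2 * C + 1 with hKdef
  have hK1 : (1 : ℝ) ≤ K := by linarith
  have hK0 : (0 : ℝ) < K := by linarith
  -- the key inequality : ‖T† y‖ ≤ K * ‖T (T† y)‖ whenever T† y ∈ D(T)
  have hkey : ∀ (y : T.adjoint.domain) (h : (T.adjoint y : H) ∈ T.domain),
      ‖(T.adjoint y : H)‖ ≤ K * ‖T ⟨(T.adjoint y : H), h⟩‖ := by
    intro y h
    set u0 : H := (T.adjoint y : H) with hu0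
    set s : ℝ := ‖T ⟨u0, h⟩‖ with hs
    set t : ℝ := ‖u0‖ with ht
    have hg : ((u0 : H), T ⟨u0, h⟩) ∈ T.graph := mem_graph _ ⟨u0, h⟩
    obtain ⟨v, hπv, hvle⟩ := hCle ⟨(u0, T ⟨u0, h⟩), hg⟩
    set w : (H × H₁) × (H₁ × H) := (v : (H × H₁) × (H₁ × H)) with hw
    have hw1 : w.1 = (u0, T ⟨u0, h⟩) := by
      rw [hw, ← hπapply v, hπv]
    obtain ⟨hp, hq, hc⟩ := (hVmem w).mp v.2
    obtain ⟨y1, hy1, hy1'⟩ := (mem_graph_iff _).mp hq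
    obtain ⟨x1, hx1, hx1'⟩ := (mem_graph_iff _).mp hc
    -- T x1 = T ⟨u0, h⟩
    have hx1T : T x1 = T ⟨u0, h⟩ := by rw [hx1', hw1]
    -- u1 = u0
    have huu : w.2.2 = u0 := by
      set d : T.adjoint.domain := y1 - y with hd
      set ww : T.domain := x1 - ⟨u0, h⟩ with hww
      have hdval : (T.adjoint d : H) = w.2.2 - u0 := by
        rw [hd, LinearPMap.map_sub, hy1', hu0]
      have hwwval : (ww : H) = w.2.2 - u0 := by
        rw [hww, Submodule.coe_sub, hx1]
      have hTww : T ww = 0 := by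
        rw [hww, LinearPMap.map_sub, hx1T, sub_self]
      have h0 : (inner ℂ (w.2.2 - u0) (w.2.2 - u0) : ℂ) = 0 := by
        have := hadj d ww
        rw [hdval, hwwval, hTww, inner_zero_right] at this
        exact this
      have := inner_self_eq_zero.mp h0
      exact sub_eq_zero.mp this
    -- t * t ≤ ‖y1‖ * s
    have e1 : (inner ℂ u0 u0 : ℂ) = inner ℂ (y1 : H₁) (T ⟨u0, h⟩) := by
      have := hadj y1 ⟨u0, h⟩
      rw [hy1', huu] at this
      exact this
    have htt : t * t ≤ ‖(y1 : H₁)‖ * s := by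
      have h1 : t * t = RCLike.re (inner ℂ u0 u0 : ℂ) :=
        (inner_self_eq_norm_mul_norm u0).symm
      rw [h1, e1]
      calc RCLike.re (inner ℂ (y1 : H₁) (T ⟨u0, h⟩) : ℂ)
          ≤ ‖(inner ℂ (y1 : H₁) (T ⟨u0, h⟩) : ℂ)‖ := RCLike.re_le_norm _
        _ ≤ ‖(y1 : H₁)‖ * ‖T ⟨u0, h⟩‖ := norm_inner_le_norm _ _
        _ = ‖(y1 : H₁)‖ * s := rfl
    -- ‖y1‖ ≤ C * max t s
    have hy1norm : ‖(y1 : H₁)‖ ≤ C * max t s := by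
      have h1 : ‖(y1 : H₁)‖ = ‖w.2.1‖ := by rw [hy1]
      have h2 : ‖w.2.1‖ ≤ ‖w‖ := le_trans (norm_fst_le w.2) (norm_snd_le w)
      have h3 : ‖w‖ = ‖v‖ := rfl
      have h4 : ‖(⟨(u0, T ⟨u0, h⟩), hg⟩ : T.graph)‖ = max t s := by
        show ‖((u0, T ⟨u0, h⟩) : H × H₁)‖ = max t s
        rw [Prod.norm_def]
      rw [h1]
      calc ‖w.2.1‖ ≤ ‖v‖ := h3 ▸ h2
        _ ≤ C * ‖(⟨(u0, T ⟨u0, h⟩), hg⟩ : T.graph)‖ := hvle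
        _ = C * max t s := by rw [h4]
    have htt2 : t * t ≤ C * max t s * s :=
      le_trans htt (mul_le_mul_of_nonneg_right hy1norm (norm_nonneg _))
    -- conclude t ≤ K * s
    have hs0 : 0 ≤ s := norm_nonneg _
    have ht0 : 0 ≤ t := norm_nonneg _
    rcases le_or_gt t s with hts | hts
    · calc t ≤ s := hts
        _ = 1 * s := (one_mul s).symm
        _ ≤ K * s := mul_le_mul_of_nonneg_right hK1 hs0
    · have hmax : max t s = t := max_eq_left hts.le
      rw [hmax] at htt2
      have ht0' : 0 < t := lt_of_le_of_lt hs0 hts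
      have : t ≤ C * s := by
        have hcomm : C * t * s = C * s * t := by ring
        have htt3 : t * t ≤ C * s * t := by linarith
        exact le_of_mul_le_mul_right htt3 ht0'
      calc t ≤ C * s := this
        _ ≤ K * s := mul_le_mul_of_nonneg_right (by linarith) hs0
  -- the closure argument
  apply IsSeqClosed.isClosed
  intro wseq v hwmem hwv
  have hw' : ∀ n, ∃ (y : H₁) (hy : y ∈ T.adjoint.domain)
      (hTy : T.adjoint ⟨y, hy⟩ ∈ T.domain), T ⟨T.adjoint ⟨y, hy⟩, hTy⟩ = wseq n := by
    intro n
    have := hwmem n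
    rw [hran] at this
    exact this
  choose y hy hTy hTweq using hw'
  set Y : ℕ → T.adjoint.domain := fun n => ⟨y n, hy n⟩ with hY
  set u : ℕ → H := fun n => (T.adjoint (Y n) : H) with hu
  have humem : ∀ n, u n ∈ T.domain := fun n => hTy n
  have hTu : ∀ n, T ⟨u n, humem n⟩ = wseq n := fun n => hTweq n
  have hdiff : ∀ n m, ‖u n - u m‖ ≤ K * ‖wseq n - wseq m‖ := by
    intro n m
    have hd : (T.adjoint (Y n - Y m) : H) = u n - u m := by rw [LinearPMap.map_sub]
    have hmem : (T.adjoint (Y n - Y m) : H) ∈ T.domain := by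
      rw [hd]; exact sub_mem (humem n) (humem m)
    have hkey' := hkey (Y n - Y m) hmem
    have heq : T ⟨(T.adjoint (Y n - Y m) : H), hmem⟩ = wseq n - wseq m := by
      have hsub : (⟨(T.adjoint (Y n - Y m) : H), hmem⟩ : T.domain)
          = ⟨u n, humem n⟩ - ⟨u m, humem m⟩ := by
        refine Subtype.ext ?_
        show (T.adjoint (Y n - Y m) : H)
            = ((⟨u n, humem n⟩ - ⟨u m, humem m⟩ : T.domain) : H)
        rw [AddSubgroupClass.coe_sub]
        exact hd
      have := congrArg (fun z : T.domain => T z) hsub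
      rw [this, LinearPMap.map_sub, hTu n, hTu m]
    rw [heq] at hkey'
    rw [hd] at hkey'
    exact hkey'
  have hwC : CauchySeq wseq := hwv.cauchySeq
  have huC : CauchySeq u := by
    rw [Metric.cauchySeq_iff] at hwC ⊢
    intro ε hε
    obtain ⟨N, hN⟩ := hwC (ε / K) (by positivity)
    refine ⟨N, fun m hm n hn => ?_⟩
    calc dist (u m) (u n) = ‖u m - u n‖ := dist_eq_norm _ _
      _ ≤ K * ‖wseq m - wseq n‖ := hdiff m n
      _ = K * dist (wseq m) (wseq n) := by rw [dist_eq_norm]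
      _ < K * (ε / K) := by
          exact mul_lt_mul_of_pos_left (by simpa [dist_eq_norm] using hN m hm n hn) hK0
      _ = ε := by field_simp
  obtain ⟨ul, hul⟩ := cauchySeq_tendsto_of_complete huC
  have hgr : Filter.Tendsto (fun n => ((u n, wseq n) : H × H₁)) Filter.atTop
      (nhds (ul, v)) := hul.prodMk_nhds hwv
  have hmemg : (ul, v) ∈ T.graph := by
    refine hclosed.mem_of_tendsto hgr (Filter.Eventually.of_forall fun n => ?_)
    have := mem_graph T ⟨u n, humem n⟩
    rwa [hTu n] at this
  obtain ⟨x, hx1, hx2⟩ := (mem_graph_iff _).mp hmemg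
  exact ⟨x, hx2⟩
end

section
/- Let T : H → H₁ be a densely defined closed linear operator between complex Hilbert spaces and let F₁ ⊆ H₁ be a closed subspace with R(T) ⊆ F₁. Then the restriction S₁ of TT* to D(TT*) ∩ F₁ maps into F₁, is densely defined as an operator in the Hilbert space F₁, and is self-adjoint as an operator in F₁. -/
open LinearPMap

section Aux

variable {H H₁ : Type*} [NormedAddCommGroup H] [InnerProductSpace ℂ H] [CompleteSpace H]
  [NormedAddCommGroup H₁] [InnerProductSpace ℂ H₁] [CompleteSpace H₁]

lemma vonNeumann_surj (T : H →ₗ.[ℂ] H₁) (hdense : Dense (T.domain : Set H))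
    (hclosed : T.IsClosed) (z : H₁) :
    ∃ (v : H₁) (hv : v ∈ T.adjoint.domain) (hTv : T.adjoint ⟨v, hv⟩ ∈ T.domain),
      v + T ⟨T.adjoint ⟨v, hv⟩, hTv⟩ = z := by
  classical
  set e := WithLp.linearEquiv 2 ℂ (H × H₁) with he
  set G : Submodule ℂ (WithLp 2 (H × H₁)) := T.graph.comap e.toLinearMap with hG
  have hGclosed : IsClosed (G : Set (WithLp 2 (H × H₁))) := by
    have hc : Continuous e := (WithLp.prodContinuousLinearEquiv 2 ℂ H H₁).continuous
    exact hclosed.preimage hc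
  haveI : CompleteSpace G := hGclosed.completeSpace_coe
  obtain ⟨g, hg, p, hp, hw⟩ :=
    G.exists_add_mem_mem_orthogonal ((WithLp.equiv 2 (H × H₁)).symm (0, z))
  obtain ⟨x, hx1, hx2⟩ := T.mem_graph_iff.mp hg
  have h1 : (0 : H) = g.ofLp.1 + p.ofLp.1 := congrArg (fun w => w.ofLp.1) hw
  have h2 : z = g.ofLp.2 + p.ofLp.2 := congrArg (fun w => w.ofLp.2) hw
  have hu : g.ofLp.1 = (x : H) := hx1.symm
  have hTx : g.ofLp.2 = T x := hx2.symm
  have hp1 : p.ofLp.1 = -(x : H) := by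
    rw [hu] at h1
    exact eq_neg_of_add_eq_zero_right h1.symm
  have horth : ∀ x' : T.domain, inner ℂ (x' : H) p.ofLp.1 + inner ℂ (T x') p.ofLp.2 = (0 : ℂ) := by
    intro x'
    have hg' : (WithLp.equiv 2 (H × H₁)).symm ((x' : H), T x') ∈ G := by
      show ((x' : H), T x') ∈ T.graph
      exact T.mem_graph x'
    have := (Submodule.mem_orthogonal G p).mp hp _ hg'
    rw [WithLp.prod_inner_apply] at this
    simpa using this
  have hkey : ∀ x' : T.domain, inner ℂ ((x : H)) (x' : H) = (inner ℂ p.ofLp.2 (T x') : ℂ) := by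
    intro x'
    have h3 := horth x'
    rw [hp1, inner_neg_right] at h3
    have h4 : inner ℂ (T x') p.ofLp.2 = (inner ℂ (x' : H) (x : H) : ℂ) := by linear_combination h3
    calc inner ℂ ((x : H)) (x' : H) = (starRingEnd ℂ) (inner ℂ (x' : H) (x : H)) :=
          (inner_conj_symm _ _).symm
      _ = (starRingEnd ℂ) (inner ℂ (T x') p.ofLp.2) := by rw [h4]
      _ = inner ℂ p.ofLp.2 (T x') := inner_conj_symm _ _
  have hvmem : p.ofLp.2 ∈ T.adjoint.domain :=
    mem_adjoint_domain_of_exists _ ⟨(x : H), hkey⟩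
  have hval : T.adjoint ⟨p.ofLp.2, hvmem⟩ = (x : H) :=
    adjoint_apply_eq hdense ⟨p.ofLp.2, hvmem⟩ hkey
  have hTv : T.adjoint ⟨p.ofLp.2, hvmem⟩ ∈ T.domain := by rw [hval]; exact x.2
  refine ⟨p.ofLp.2, hvmem, hTv, ?_⟩
  have : (⟨T.adjoint ⟨p.ofLp.2, hvmem⟩, hTv⟩ : T.domain) = x := Subtype.ext hval
  rw [this]
  rw [hTx] at h2
  rw [h2]; abel

lemma selfAdjoint_of_symm_surj {F : Type*} [NormedAddCommGroup F] [InnerProductSpace ℂ F]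
    [CompleteSpace F] (A : F →ₗ.[ℂ] F)
    (hsymm : A.IsFormalAdjoint A)
    (hpos : ∀ v : A.domain, 0 ≤ (inner ℂ (v : F) (A v) : ℂ).re)
    (hsurj : ∀ z : F, ∃ v : A.domain, (v : F) + A v = z) :
    Dense (A.domain : Set F) ∧ A.adjoint = A := by
  have hdense : Dense (A.domain : Set F) := by
    rw [Submodule.dense_iff_topologicalClosure_eq_top,
      Submodule.topologicalClosure_eq_top_iff]
    rw [Submodule.eq_bot_iff]
    intro z hz
    obtain ⟨v, hv⟩ := hsurj z
    have h0 : inner ℂ (v : F) z = (0 : ℂ) :=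
      (Submodule.mem_orthogonal A.domain z).mp hz _ v.2
    rw [← hv, inner_add_right] at h0
    have hself : (inner ℂ (v : F) (v : F) : ℂ) = (‖(v : F)‖ : ℂ) ^ 2 :=
      inner_self_eq_norm_sq_to_K _
    rw [hself] at h0
    have hre : ‖(v : F)‖ ^ 2 + (inner ℂ (v : F) (A v) : ℂ).re = 0 := by
      have := congrArg Complex.re h0
      simpa [← Complex.ofReal_pow] using this
    have hvnorm : ‖(v : F)‖ = 0 := by
      have h1 := hpos v
      nlinarith [norm_nonneg (v : F)]
    have hv0' : v = 0 := Subtype.ext (norm_eq_zero.mp hvnorm)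
    rw [← hv, hv0']
    simp
  refine ⟨hdense, ?_⟩
  have hle : A ≤ A.adjoint := hsymm.le_adjoint hdense
  have hadj : A.adjoint.IsFormalAdjoint A := adjoint_isFormalAdjoint hdense
  have hdom : A.adjoint.domain ≤ A.domain := by
    intro y hy
    set yy : A.adjoint.domain := ⟨y, hy⟩ with hyy
    obtain ⟨v, hv⟩ := hsurj (y + A.adjoint yy)
    have hkey : ∀ x : A.domain, inner ℂ ((x : F) + A x) (y - (v : F)) = (0 : ℂ) := by
      intro x
      rw [inner_add_left, inner_sub_right, inner_sub_right]
      have e1 : inner ℂ (A x) y = (inner ℂ (x : F) (A.adjoint yy) : ℂ) := by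
        calc inner ℂ (A x) y = (starRingEnd ℂ) (inner ℂ y (A x)) := (inner_conj_symm _ _).symm
          _ = (starRingEnd ℂ) (inner ℂ (A.adjoint yy) (x : F)) := by rw [hadj yy x]
          _ = inner ℂ (x : F) (A.adjoint yy) := inner_conj_symm _ _
      have e2 : inner ℂ (A x) (v : F) = (inner ℂ (x : F) (A v) : ℂ) := by
        calc inner ℂ (A x) (v : F) = (starRingEnd ℂ) (inner ℂ (v : F) (A x)) :=
              (inner_conj_symm _ _).symm
          _ = (starRingEnd ℂ) (inner ℂ (A v) (x : F)) := by rw [hsymm v x]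
          _ = inner ℂ (x : F) (A v) := inner_conj_symm _ _
      rw [e1, e2]
      have : inner ℂ (x : F) (y + A.adjoint yy) = (inner ℂ (x : F) ((v : F) + A v) : ℂ) := by
        rw [hv]
      rw [inner_add_right, inner_add_right] at this
      ring_nf
      linear_combination this
    have hyv : y = (v : F) := by
      have hz : ∀ z : F, inner ℂ z (y - (v : F)) = (0 : ℂ) := by
        intro z
        obtain ⟨x, hx⟩ := hsurj z
        rw [← hx]; exact hkey x
      have := hz (y - (v : F))
      rw [inner_self_eq_zero] at this
      exact sub_eq_zero.mp this
    rw [hyv]; exact v.2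
  have hge : A.adjoint ≤ A := by
    refine ⟨hdom, fun x y hxy => ?_⟩
    exact (hle.2 (x := y) (y := x) hxy.symm).symm
  exact le_antisymm hge hle

end Aux

/-- For a densely defined closed operator `T : H → H₁` and a closed subspace
`F₁ ⊇ R(T)`, the restriction `S₁` of `TT*` to `D(TT*) ∩ F₁` maps into `F₁`, is densely defined
in the Hilbert space `F₁`, and is self-adjoint as an operator in `F₁`. -/


theorem stmt8 {H H₁ : Type*} [NormedAddCommGroup H] [InnerProductSpace ℂ H] [CompleteSpace H]
    [NormedAddCommGroup H₁] [InnerProductSpace ℂ H₁] [CompleteSpace H₁]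
    (T : H →ₗ.[ℂ] H₁) (hdense : Dense (T.domain : Set H)) (hclosed : T.IsClosed)
    (F₁ : Submodule ℂ H₁) [CompleteSpace F₁] (hF₁ : IsClosed (F₁ : Set H₁))
    (hRF₁ : T.ranSet ⊆ (F₁ : Set H₁)) :
    (∀ (y : H₁) (hy : y ∈ T.adjoint.domain) (hTy : T.adjoint ⟨y, hy⟩ ∈ T.domain),
      y ∈ F₁ → T ⟨T.adjoint ⟨y, hy⟩, hTy⟩ ∈ F₁) ∧
    ∃ S₁ : (↥F₁) →ₗ.[ℂ] (↥F₁),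
      (∀ y : F₁, y ∈ S₁.domain ↔
        ∃ hy : (y : H₁) ∈ T.adjoint.domain, T.adjoint ⟨(y : H₁), hy⟩ ∈ T.domain) ∧
      (∀ (y : S₁.domain) (hy : ((y : F₁) : H₁) ∈ T.adjoint.domain)
        (hTy : T.adjoint ⟨((y : F₁) : H₁), hy⟩ ∈ T.domain),
        ((S₁ y : F₁) : H₁) = T ⟨T.adjoint ⟨((y : F₁) : H₁), hy⟩, hTy⟩) ∧
      Dense (S₁.domain : Set F₁) ∧
      S₁.adjoint = S₁ := by
  have hran : ∀ x : T.domain, T x ∈ F₁ := fun x => hRF₁ ⟨x, rfl⟩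
  constructor
  · intro y hy hTy _
    exact hran _
  -- the domain of S₁
  set D₁ : Submodule ℂ F₁ :=
    { carrier := {y : F₁ | ∃ hy : (y : H₁) ∈ T.adjoint.domain,
        T.adjoint ⟨(y : H₁), hy⟩ ∈ T.domain}
      zero_mem' := by
        refine ⟨by simp, ?_⟩
        have h0 : (⟨((0 : F₁) : H₁), by simp⟩ : T.adjoint.domain) = 0 := by
          apply Subtype.ext; simp
        rw [h0, T.adjoint.map_zero]
        exact T.domain.zero_mem
      add_mem' := by
        rintro a b ⟨ha, hTa⟩ ⟨hb, hTb⟩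
        refine ⟨by exact Submodule.add_mem _ ha hb, ?_⟩
        have he : (⟨((a + b : F₁) : H₁), by exact Submodule.add_mem _ ha hb⟩ :
            T.adjoint.domain) = ⟨(a : H₁), ha⟩ + ⟨(b : H₁), hb⟩ := by
          apply Subtype.ext; simp
        rw [he, T.adjoint.map_add]
        exact T.domain.add_mem hTa hTb
      smul_mem' := by
        rintro c a ⟨ha, hTa⟩
        refine ⟨by exact Submodule.smul_mem _ c ha, ?_⟩
        have he : (⟨((c • a : F₁) : H₁), by exact Submodule.smul_mem _ c ha⟩ :
            T.adjoint.domain) = c • ⟨(a : H₁), ha⟩ := by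
          apply Subtype.ext; simp
        rw [he, T.adjoint.map_smul]
        exact T.domain.smul_mem c hTa } with hD₁
  -- the value of S₁, independent of proofs
  have hmem : ∀ y : D₁, ∃ hy : ((y : F₁) : H₁) ∈ T.adjoint.domain,
      T.adjoint ⟨((y : F₁) : H₁), hy⟩ ∈ T.domain := fun y => y.2
  set f : D₁ →ₗ[ℂ] F₁ :=
    { toFun := fun y => ⟨T ⟨T.adjoint ⟨((y : F₁) : H₁), (hmem y).choose⟩,
        (hmem y).choose_spec⟩, hran _⟩
      map_add' := by
        intro a b
        apply Subtype.ext
        show (T _ : H₁) = (T _ : H₁) + (T _ : H₁)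
        obtain ⟨ha, hTa⟩ := hmem a
        obtain ⟨hb, hTb⟩ := hmem b
        have e1 : (⟨(((a + b : D₁) : F₁) : H₁), (hmem (a + b)).choose⟩ : T.adjoint.domain)
            = ⟨((a : F₁) : H₁), ha⟩ + ⟨((b : F₁) : H₁), hb⟩ := by
          apply Subtype.ext; simp
        have e2 : T.adjoint ⟨(((a + b : D₁) : F₁) : H₁), (hmem (a + b)).choose⟩
            = T.adjoint ⟨((a : F₁) : H₁), ha⟩ + T.adjoint ⟨((b : F₁) : H₁), hb⟩ := by
          rw [e1, T.adjoint.map_add]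
        have e3 : (⟨T.adjoint ⟨(((a + b : D₁) : F₁) : H₁), (hmem (a + b)).choose⟩,
            (hmem (a + b)).choose_spec⟩ : T.domain)
            = ⟨T.adjoint ⟨((a : F₁) : H₁), ha⟩, hTa⟩ + ⟨T.adjoint ⟨((b : F₁) : H₁), hb⟩, hTb⟩ := by
          apply Subtype.ext; simpa using e2
        rw [e3, T.map_add]
      map_smul' := by
        intro c a
        apply Subtype.ext
        show (T _ : H₁) = c • (T _ : H₁)
        obtain ⟨ha, hTa⟩ := hmem a
        have e2 : T.adjoint ⟨(((c • a : D₁) : F₁) : H₁), (hmem (c • a)).choose⟩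
            = c • T.adjoint ⟨((a : F₁) : H₁), ha⟩ := by
          have e1 : (⟨(((c • a : D₁) : F₁) : H₁), (hmem (c • a)).choose⟩ : T.adjoint.domain)
              = c • ⟨((a : F₁) : H₁), ha⟩ := by
            apply Subtype.ext; simp
          rw [e1, T.adjoint.map_smul]
        have e3 : (⟨T.adjoint ⟨(((c • a : D₁) : F₁) : H₁), (hmem (c • a)).choose⟩,
            (hmem (c • a)).choose_spec⟩ : T.domain)
            = c • ⟨T.adjoint ⟨((a : F₁) : H₁), ha⟩, hTa⟩ := by
          apply Subtype.ext; simpa using e2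
        rw [e3, T.map_smul] } with hf
  refine ⟨⟨D₁, f⟩, ?_, ?_, ?_⟩
  · intro y; exact Iff.rfl
  · intro y hy hTy
    rfl
  · -- density and self-adjointness
    set S₁ : (↥F₁) →ₗ.[ℂ] (↥F₁) := ⟨D₁, f⟩ with hS₁
    have hFormal := adjoint_isFormalAdjoint (T := T) hdense
    have hval : ∀ (y : S₁.domain) (hy : ((y : F₁) : H₁) ∈ T.adjoint.domain)
        (hTy : T.adjoint ⟨((y : F₁) : H₁), hy⟩ ∈ T.domain),
        ((S₁ y : F₁) : H₁) = T ⟨T.adjoint ⟨((y : F₁) : H₁), hy⟩, hTy⟩ := fun y hy hTy => rfl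
    have hsymm : S₁.IsFormalAdjoint S₁ := by
      intro x y
      obtain ⟨hx, hTx⟩ := hmem x
      obtain ⟨hy, hTy⟩ := hmem y
      rw [Submodule.coe_inner, Submodule.coe_inner]
      rw [hval x hx hTx, hval y hy hTy]
      have e1 : inner ℂ (T ⟨T.adjoint ⟨((x : F₁) : H₁), hx⟩, hTx⟩) ((y : F₁) : H₁)
          = (inner ℂ (T.adjoint ⟨((x : F₁) : H₁), hx⟩)
              (T.adjoint ⟨((y : F₁) : H₁), hy⟩) : ℂ) := by
        calc inner ℂ (T ⟨T.adjoint ⟨((x : F₁) : H₁), hx⟩, hTx⟩) ((y : F₁) : H₁)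
            = (starRingEnd ℂ) (inner ℂ (((y : F₁) : H₁))
                (T ⟨T.adjoint ⟨((x : F₁) : H₁), hx⟩, hTx⟩)) := (inner_conj_symm _ _).symm
          _ = (starRingEnd ℂ) (inner ℂ (T.adjoint ⟨((y : F₁) : H₁), hy⟩)
                ((T.adjoint ⟨((x : F₁) : H₁), hx⟩ : H))) := by
                rw [← hFormal ⟨((y : F₁) : H₁), hy⟩ ⟨T.adjoint ⟨((x : F₁) : H₁), hx⟩, hTx⟩]
          _ = inner ℂ (T.adjoint ⟨((x : F₁) : H₁), hx⟩)
                (T.adjoint ⟨((y : F₁) : H₁), hy⟩) := inner_conj_symm _ _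
      have e2 : (inner ℂ (((x : F₁) : H₁)) (T ⟨T.adjoint ⟨((y : F₁) : H₁), hy⟩, hTy⟩) : ℂ)
          = inner ℂ (T.adjoint ⟨((x : F₁) : H₁), hx⟩) (T.adjoint ⟨((y : F₁) : H₁), hy⟩) :=
        (hFormal ⟨((x : F₁) : H₁), hx⟩ ⟨T.adjoint ⟨((y : F₁) : H₁), hy⟩, hTy⟩).symm
      rw [e1, e2]
    have hpos : ∀ v : S₁.domain, 0 ≤ (inner ℂ (v : F₁) (S₁ v) : ℂ).re := by
      intro v
      obtain ⟨hv, hTv⟩ := hmem v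
      rw [Submodule.coe_inner, hval v hv hTv]
      have e2 : (inner ℂ (((v : F₁) : H₁)) (T ⟨T.adjoint ⟨((v : F₁) : H₁), hv⟩, hTv⟩) : ℂ)
          = inner ℂ (T.adjoint ⟨((v : F₁) : H₁), hv⟩) (T.adjoint ⟨((v : F₁) : H₁), hv⟩) :=
        (hFormal ⟨((v : F₁) : H₁), hv⟩ ⟨T.adjoint ⟨((v : F₁) : H₁), hv⟩, hTv⟩).symm
      rw [e2, inner_self_eq_norm_sq_to_K _]
      simp [← Complex.ofReal_pow]
    have hsurj : ∀ z : F₁, ∃ v : S₁.domain, (v : F₁) + S₁ v = z := by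
      intro z
      obtain ⟨v, hv, hTv, hvz⟩ := vonNeumann_surj T hdense hclosed (z : H₁)
      have hvF : v ∈ F₁ := by
        have : v = (z : H₁) - T ⟨T.adjoint ⟨v, hv⟩, hTv⟩ := by rw [← hvz]; abel
        rw [this]
        exact Submodule.sub_mem _ z.2 (hran _)
      refine ⟨⟨⟨v, hvF⟩, hv, hTv⟩, ?_⟩
      apply Subtype.ext
      show v + ((S₁ _ : F₁) : H₁) = (z : H₁)
      rw [hval ⟨⟨v, hvF⟩, hv, hTv⟩ hv hTv]
      exact hvz
    obtain ⟨hd, heq⟩ := selfAdjoint_of_symm_surj S₁ hsymm hpos hsurj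
    exact ⟨hd, heq⟩
end

section
/- Let H₀, H, H₂ be complex Hilbert spaces, and let T : H₀ → H and S : H → H₂ be densely defined closed linear operators such that R(T) ⊆ Z(S). If there exists c > 0 such that ‖v‖ ≤ c‖T*v‖ for every v ∈ D(T*) ∩ Z(S), then Z(S) = R(T); in particular R(T) is closed and every element of the kernel of S lies in the range of T. -/
open LinearPMap

local notation "⟪" x ", " y "⟫" => @inner ℂ _ _ x y

section Aux
variable {H₀ H H₂ : Type*}
    [NormedAddCommGroup H₀] [InnerProductSpace ℂ H₀] [CompleteSpace H₀]
    [NormedAddCommGroup H] [InnerProductSpace ℂ H] [CompleteSpace H]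
    [NormedAddCommGroup H₂] [InnerProductSpace ℂ H₂] [CompleteSpace H₂]

theorem LinearPMap.kerSet_isClosed (S : H →ₗ.[ℂ] H₂) (hSclosed : S.IsClosed) :
    _root_.IsClosed S.kerSet := by
  have : S.kerSet = (fun v : H => (v, (0 : H₂))) ⁻¹' (S.graph : Set (H × H₂)) := by
    ext v
    simp only [Set.mem_preimage, SetLike.mem_coe, LinearPMap.mem_graph_iff, LinearPMap.kerSet]
    constructor
    · rintro ⟨hw, h0⟩; exact ⟨⟨v, hw⟩, rfl, h0⟩
    · rintro ⟨⟨w, hw⟩, rfl, h0⟩; exact ⟨hw, h0⟩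
  rw [this]
  exact hSclosed.preimage (continuous_id.prodMk continuous_const)

theorem mem_graph_of_forall_adjoint (T : H₀ →ₗ.[ℂ] H)
    (hTdense : Dense (T.domain : Set H₀)) (hTclosed : T.IsClosed) (x : H₀) (y : H)
    (hxy : ∀ (b : H) (hb : b ∈ T.adjoint.domain), ⟪T.adjoint ⟨b, hb⟩, x⟫ = ⟪b, y⟫) :
    ∃ hx : x ∈ T.domain, T ⟨x, hx⟩ = y := by
  set e : (H₀ × H) ≃ₗ[ℂ] WithLp 2 (H₀ × H) := (WithLp.linearEquiv 2 ℂ (H₀ × H)).symm with he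
  set G2 : Submodule ℂ (WithLp 2 (H₀ × H)) := T.graph.map (e : (H₀ × H) →ₗ[ℂ] WithLp 2 (H₀ × H))
    with hG2
  have hmemG2 : ∀ z : WithLp 2 (H₀ × H), z ∈ G2 ↔
      (WithLp.equiv 2 (H₀ × H) z) ∈ T.graph := by
    intro z
    constructor
    · rintro ⟨a, ha, rfl⟩; exact ha
    · intro hz; exact ⟨WithLp.equiv 2 (H₀ × H) z, hz, rfl⟩
  have hG2closed : IsClosed (G2 : Set (WithLp 2 (H₀ × H))) := by
    have : (G2 : Set (WithLp 2 (H₀ × H))) =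
        (WithLp.prodContinuousLinearEquiv 2 ℂ H₀ H) ⁻¹' (T.graph : Set (H₀ × H)) := by
      ext z; exact hmemG2 z
    rw [this]
    exact hTclosed.preimage (WithLp.prodContinuousLinearEquiv 2 ℂ H₀ H).continuous
  haveI : CompleteSpace G2 := hG2closed.completeSpace_coe
  have key : e (x, y) ∈ G2ᗮᗮ := by
    rw [Submodule.mem_orthogonal]
    intro u hu
    set a : H₀ := (WithLp.equiv 2 (H₀ × H) u).1 with ha
    set b : H := (WithLp.equiv 2 (H₀ × H) u).2 with hb
    have horth : ∀ p : T.domain, ⟪(p : H₀), a⟫ + ⟪T p, b⟫ = 0 := by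
      intro p
      have hg : e ((p : H₀), T p) ∈ G2 := (hmemG2 _).2 (T.mem_graph p)
      have := (Submodule.mem_orthogonal G2 u).1 hu _ hg
      rw [WithLp.prod_inner_apply] at this
      exact this
    have hbmem : b ∈ T.adjoint.domain := by
      refine mem_adjoint_domain_of_exists _ ⟨-a, fun p => ?_⟩
      have hc : ⟪a, (p : H₀)⟫ + ⟪b, (T p : H)⟫ = 0 := by
        simpa using congrArg (starRingEnd ℂ) (horth p)
      rw [inner_neg_left]
      linear_combination -hc
    have hTb : T.adjoint ⟨b, hbmem⟩ = -a := by
      refine adjoint_apply_eq hTdense _ fun p => ?_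
      have hc : ⟪a, (p : H₀)⟫ + ⟪b, (T p : H)⟫ = 0 := by
        simpa using congrArg (starRingEnd ℂ) (horth p)
      rw [inner_neg_left]
      linear_combination -hc
    have h1 : ⟪u, e (x, y)⟫ = ⟪a, x⟫ + ⟪b, y⟫ := by
      rw [WithLp.prod_inner_apply]; rfl
    have h2 := hxy b hbmem
    rw [hTb, inner_neg_left] at h2
    rw [h1, ← h2]
    ring
  rw [Submodule.orthogonal_orthogonal] at key
  rw [hmemG2] at key
  rw [LinearPMap.mem_graph_iff] at key
  obtain ⟨x', hx1, hx2⟩ := key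
  have hx1' : (x' : H₀) = x := hx1
  have hxmem : x ∈ T.domain := hx1' ▸ x'.2
  refine ⟨hxmem, ?_⟩
  have : (⟨x, hxmem⟩ : T.domain) = x' := Subtype.ext hx1'.symm
  rw [this]; exact hx2


theorem stmt10_main (T : H₀ →ₗ.[ℂ] H) (S : H →ₗ.[ℂ] H₂)
    (hTdense : Dense (T.domain : Set H₀)) (hTclosed : T.IsClosed)
    (hSdense : Dense (S.domain : Set H)) (hSclosed : S.IsClosed)
    (hRZ : (Set.range fun x : T.domain => T x) ⊆ {x : H | ∃ hx : x ∈ S.domain, S ⟨x, hx⟩ = 0})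
    (hest : ∃ c > (0 : ℝ), ∀ (v : H) (hv : v ∈ T.adjoint.domain),
      v ∈ {x : H | ∃ hx : x ∈ S.domain, S ⟨x, hx⟩ = 0} →
      ‖v‖ ≤ c * ‖T.adjoint ⟨v, hv⟩‖) :
    {x : H | ∃ hx : x ∈ S.domain, S ⟨x, hx⟩ = 0} ⊆ Set.range fun x : T.domain => T x := by
  obtain ⟨c, hc, hbound⟩ := hest
  set ZS : Submodule ℂ H := (LinearMap.ker S.toFun).map S.domain.subtype with hZS
  have hZSset : {x : H | ∃ hx : x ∈ S.domain, S ⟨x, hx⟩ = 0} = (ZS : Set H) := by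
    ext v
    constructor
    · rintro ⟨hv, h0⟩; exact ⟨⟨v, hv⟩, h0, rfl⟩
    · rintro ⟨⟨w, hw⟩, h0, rfl⟩; exact ⟨hw, h0⟩
  have hZSclosed : IsClosed (ZS : Set H) := by
    have : (ZS : Set H) = (fun v : H => (v, (0 : H₂))) ⁻¹' (S.graph : Set (H × H₂)) := by
      ext v
      simp only [Set.mem_preimage, SetLike.mem_coe, LinearPMap.mem_graph_iff]
      constructor
      · rintro ⟨⟨w, hw⟩, h0, rfl⟩; exact ⟨⟨w, hw⟩, rfl, h0⟩
      · rintro ⟨x', rfl, h0⟩; exact ⟨x', h0, rfl⟩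
    rw [this]
    exact hSclosed.preimage (continuous_id.prodMk continuous_const)
  haveI : CompleteSpace ZS := hZSclosed.completeSpace_coe
  have hsub : ∀ p : T.domain, (T p : H) ∈ ZS := by
    intro p
    rw [← SetLike.mem_coe, ← hZSset]
    exact hRZ ⟨p, rfl⟩
  intro y hy
  have hyZS : y ∈ ZS := by rw [hZSset] at hy; exact hy
  set A : T.adjoint.domain →ₗ[ℂ] H₀ := T.adjoint.toFun with hA
  set φ : T.adjoint.domain →ₗ[ℂ] ℂ := (innerₛₗ ℂ y).comp T.adjoint.domain.subtype with hφ
  have hφapp : ∀ b : T.adjoint.domain, φ b = ⟪y, (b : H)⟫ := fun b => rfl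
  have hφA : ∀ b : T.adjoint.domain, ‖φ b‖ ≤ (c * ‖y‖) * ‖A b‖ := by
    intro b
    obtain ⟨b₁, hb₁, b₂, hb₂, hdecomp⟩ := ZS.exists_add_mem_mem_orthogonal (b : H)
    have hb₂T : ∀ p : T.domain, ⟪b₂, (T p : H)⟫ = 0 := by
      intro p
      rw [← inner_conj_symm]
      rw [(Submodule.mem_orthogonal ZS b₂).1 hb₂ _ (hsub p)]
      simp
    have hb₂mem : b₂ ∈ T.adjoint.domain :=
      mem_adjoint_domain_of_exists _ ⟨0, fun p => by rw [inner_zero_left, hb₂T p]⟩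
    have hT2 : T.adjoint ⟨b₂, hb₂mem⟩ = 0 :=
      adjoint_apply_eq hTdense _ fun p => by rw [inner_zero_left, hb₂T p]
    have hb₁eq : b₁ = (b : H) - b₂ := by rw [hdecomp]; abel
    have hb₁mem : b₁ ∈ T.adjoint.domain := by
      rw [hb₁eq]; exact sub_mem b.2 hb₂mem
    have hA1 : T.adjoint ⟨b₁, hb₁mem⟩ = A b := by
      have hsubt : (⟨b₁, hb₁mem⟩ : T.adjoint.domain) = b - ⟨b₂, hb₂mem⟩ := Subtype.ext hb₁eq
      rw [hsubt, LinearPMap.map_sub, hT2, sub_zero]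
      rfl
    have hb₁ker : b₁ ∈ {x : H | ∃ hx : x ∈ S.domain, S ⟨x, hx⟩ = 0} := by
      rw [hZSset]; exact hb₁
    have hquant := hbound b₁ hb₁mem hb₁ker
    rw [hA1] at hquant
    have hyb : ⟪y, (b : H)⟫ = ⟪y, b₁⟫ := by
      rw [hdecomp, inner_add_right,
        (Submodule.mem_orthogonal ZS b₂).1 hb₂ _ hyZS, add_zero]
    calc ‖φ b‖ = ‖⟪y, b₁⟫‖ := by rw [hφapp, hyb]
      _ ≤ ‖y‖ * ‖b₁‖ := norm_inner_le_norm _ _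
      _ ≤ ‖y‖ * (c * ‖A b‖) := by
          refine mul_le_mul_of_nonneg_left hquant (norm_nonneg y)
      _ = (c * ‖y‖) * ‖A b‖ := by ring
  -- the functional on the range of A
  have hker : LinearMap.ker A ≤ LinearMap.ker φ := by
    intro b hb
    rw [LinearMap.mem_ker] at hb ⊢
    have := hφA b
    rw [hb, norm_zero, mul_zero] at this
    exact norm_le_zero_iff.1 this
  set N : Submodule ℂ H₀ := LinearMap.range A with hN
  set f : N →ₗ[ℂ] ℂ :=
    ((LinearMap.ker A).liftQ φ hker).comp A.quotKerEquivRange.symm.toLinearMap with hf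
  have hfA : ∀ b : T.adjoint.domain, f ⟨A b, LinearMap.mem_range_self A b⟩ = φ b := by
    intro b
    have h1 : (⟨A b, LinearMap.mem_range_self A b⟩ : N) =
        A.quotKerEquivRange (Submodule.Quotient.mk b) :=
      Subtype.ext (A.quotKerEquivRange_apply_mk b).symm
    rw [hf, LinearMap.comp_apply, h1, LinearEquiv.coe_toLinearMap,
      LinearEquiv.symm_apply_apply, Submodule.liftQ_apply]
  have hfbound : ∀ w : N, ‖f w‖ ≤ (c * ‖y‖) * ‖w‖ := by
    rintro ⟨w, hw⟩
    obtain ⟨b, rfl⟩ := hw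
    rw [show (⟨A b, ⟨b, rfl⟩⟩ : N) = ⟨A b, LinearMap.mem_range_self A b⟩ from rfl, hfA]
    exact hφA b
  set fC : N →L[ℂ] ℂ := f.mkContinuous _ hfbound with hfC
  set M : Submodule ℂ H₀ := N.topologicalClosure with hM
  haveI : CompleteSpace M := N.isClosed_topologicalClosure.completeSpace_coe
  set i : N →L[ℂ] M :=
    (Submodule.inclusion N.le_topologicalClosure).mkContinuous 1 (fun w => by simp) with hi
  have hi_app : ∀ w : N, (i w : H₀) = (w : H₀) := fun w => rfl
  have hi_iso : Isometry i := AddMonoidHomClass.isometry_of_norm _ (fun w => rfl)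
  have hi_dense : DenseRange i := by
    intro m
    have himg : Subtype.val '' Set.range i = (N : Set H₀) := by
      ext v
      constructor
      · rintro ⟨w, ⟨n, rfl⟩, rfl⟩
        exact (hi_app n ▸ n.2)
      · intro hv
        exact ⟨i ⟨v, hv⟩, ⟨⟨v, hv⟩, rfl⟩, rfl⟩
    rw [closure_subtype, himg, ← Submodule.topologicalClosure_coe]
    exact m.2
  set g : H₀ →L[ℂ] ℂ :=
    (fC.extend i).comp
      (M.orthogonalProjectionOnto : H₀ →L[ℂ] M) with hg
  set x : H₀ := (InnerProductSpace.toDual ℂ H₀).symm g with hx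
  have hxinner : ∀ b : T.adjoint.domain, ⟪x, A b⟫ = ⟪y, (b : H)⟫ := by
    intro b
    rw [hx, InnerProductSpace.toDual_symm_apply]
    have hmemN : A b ∈ N := LinearMap.mem_range_self A b
    have hmemM : A b ∈ M := N.le_topologicalClosure hmemN
    have hproj : M.orthogonalProjectionOnto (A b) = ⟨A b, hmemM⟩ :=
      Submodule.orthogonalProjectionOnto_mem_subspace_eq_self (⟨A b, hmemM⟩ : M)
    have hieq : i ⟨A b, hmemN⟩ = ⟨A b, hmemM⟩ := rfl
    rw [hg, ContinuousLinearMap.comp_apply, hproj, ← hieq, ContinuousLinearMap.extend_eq _ hi_dense hi_iso.isUniformInducing]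
    rw [hfC]
    show f ⟨A b, hmemN⟩ = _
    rw [show (⟨A b, hmemN⟩ : N) = ⟨A b, LinearMap.mem_range_self A b⟩ from rfl, hfA, hφapp]
  obtain ⟨hxmem, hTx⟩ := mem_graph_of_forall_adjoint T hTdense hTclosed x y (by
    intro b hb
    have h1 := hxinner ⟨b, hb⟩
    have h2 : (A ⟨b, hb⟩ : H₀) = T.adjoint ⟨b, hb⟩ := rfl
    rw [h2] at h1
    rw [← inner_conj_symm, h1, inner_conj_symm])
  exact ⟨⟨x, hxmem⟩, hTx⟩

end Aux

/-- Let `T : H₀ → H` and `S : H → H₂` be densely defined closed operators with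
`R(T) ⊆ Z(S)`.  If there is `c > 0` with `‖v‖ ≤ c‖T*v‖` for all `v ∈ D(T*) ∩ Z(S)`, then
`Z(S) = R(T)`; in particular `R(T)` is closed and every kernel element of `S` is in `R(T)`. -/
theorem stmt10 {H₀ H H₂ : Type*}
    [NormedAddCommGroup H₀] [InnerProductSpace ℂ H₀] [CompleteSpace H₀]
    [NormedAddCommGroup H] [InnerProductSpace ℂ H] [CompleteSpace H]
    [NormedAddCommGroup H₂] [InnerProductSpace ℂ H₂] [CompleteSpace H₂]
    (T : H₀ →ₗ.[ℂ] H) (S : H →ₗ.[ℂ] H₂)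
    (hTdense : Dense (T.domain : Set H₀)) (hTclosed : T.IsClosed)
    (hSdense : Dense (S.domain : Set H)) (hSclosed : S.IsClosed)
    (hRZ : T.ranSet ⊆ S.kerSet)
    (hest : ∃ c > (0 : ℝ), ∀ (v : H) (hv : v ∈ T.adjoint.domain), v ∈ S.kerSet →
      ‖v‖ ≤ c * ‖T.adjoint ⟨v, hv⟩‖) :
    S.kerSet = T.ranSet ∧ IsClosed T.ranSet ∧ S.kerSet ⊆ T.ranSet := by
  have main : S.kerSet ⊆ T.ranSet :=
    stmt10_main T S hTdense hTclosed hSdense hSclosed hRZ hest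
  have heq : S.kerSet = T.ranSet := Set.Subset.antisymm main hRZ
  refine ⟨heq, ?_, main⟩
  rw [← heq]
  exact S.kerSet_isClosed hSclosed
end

section
/- Let Φ ∈ C¹(ℝⁿ, ℝ) and suppose there exist ω > 0 and C > 0 such that x·∇Φ(x) ≥ |x|^{1+ω}/C whenever |x| ≥ C. Then for each k ∈ ℕ there exists a constant C₁ > 0 such that for every x ∈ ℝⁿ with |x| ≥ C and every t ∈ [0,1], (1 + |x − tx|²)^{k/2} · e^{−(Φ(x) − Φ(tx))/2} ≤ C₁. -/
set_option maxHeartbeats 1600000 in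
/-- if `Φ ∈ C¹(ℝⁿ, ℝ)` satisfies condition (IV_ω), then for each `k ∈ ℕ` there is
`C₁ > 0` with `⟨x − tx⟩^k e^{−(Φ(x)−Φ(tx))/2} ≤ C₁` for all `|x| ≥ C` and `t ∈ [0,1]`,
where `⟨y⟩ = (1+|y|²)^{1/2}`. -/
theorem stmt16 {n : ℕ} (Φ : EuclideanSpace ℝ (Fin n) → ℝ) (hΦ : ContDiff ℝ 1 Φ)
    (ω C : ℝ) (hω : 0 < ω) (hC : 0 < C)
    (hIV : ∀ x : EuclideanSpace ℝ (Fin n), C ≤ ‖x‖ → ‖x‖ ^ (1 + ω) / C ≤ fderiv ℝ Φ x x) :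
    ∀ k : ℕ, ∃ C₁ > (0 : ℝ), ∀ (x : EuclideanSpace ℝ (Fin n)) (t : ℝ),
      C ≤ ‖x‖ → t ∈ Set.Icc (0 : ℝ) 1 →
      (1 + ‖x - t • x‖ ^ 2) ^ ((k : ℝ) / 2) * Real.exp (-(Φ x - Φ (t • x)) / 2) ≤ C₁ := by
  intro k
  -- bound on Φ on the closed ball of radius C
  obtain ⟨B, hB⟩ : ∃ B, ∀ y ∈ Metric.closedBall (0 : EuclideanSpace ℝ (Fin n)) C, ‖Φ y‖ ≤ B :=
    (isCompact_closedBall _ _).exists_bound_of_continuousOn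
      (hΦ.continuous.continuousOn)
  have hB0 : 0 ≤ B := le_trans (norm_nonneg _)
    (hB 0 (by simpa [Metric.mem_closedBall] using hC.le))
  set c : ℝ := C ^ ω / ((1 + ω) * C) with hc_def
  have hωC : (0:ℝ) < (1 + ω) * C := by positivity
  have hc : 0 < c := by
    apply div_pos (Real.rpow_pos_of_pos hC ω) hωC
  set ε : ℝ := min 1 (c / (2 * (k + 1))) with hε_def
  have hε0 : 0 < ε := lt_min one_pos (by positivity)
  have hε1 : ε ≤ 1 := min_le_left _ _
  have hεk : (k : ℝ) * ε ≤ c / 2 := by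
    have h1 : ε ≤ c / (2 * (k + 1)) := min_le_right _ _
    have h2 : (k : ℝ) * ε ≤ (k : ℝ) * (c / (2 * (k + 1))) :=
      mul_le_mul_of_nonneg_left h1 (Nat.cast_nonneg k)
    refine h2.trans ?_
    have h3 : (k : ℝ) * (c / (2 * (k + 1))) = (c / 2) * ((k : ℝ) / ((k : ℝ) + 1)) := by
      field_simp
    have h4 : (k : ℝ) / ((k : ℝ) + 1) ≤ 1 := by
      rw [div_le_one (by positivity)]; linarith
    rw [h3]
    exact mul_le_of_le_one_right (by positivity) h4
  refine ⟨ε⁻¹ ^ k * Real.exp ((c * C + 2 * B) / 2), by positivity, ?_⟩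
  intro x t hx ht
  obtain ⟨ht0, ht1⟩ := ht
  have hx0 : (0:ℝ) < ‖x‖ := lt_of_lt_of_le hC hx
  set r : ℝ := (1 - t) * ‖x‖ with hr_def
  have hr0 : 0 ≤ r := mul_nonneg (by linarith) hx0.le
  have hnorm : ‖x - t • x‖ = r := by
    have : x - t • x = (1 - t) • x := by
      rw [sub_smul, one_smul]
    rw [this, norm_smul, Real.norm_eq_abs, abs_of_nonneg (by linarith)]
  -- the intermediate parameter
  set s₀ : ℝ := max t (C / ‖x‖) with hs₀_def
  have hCx : C / ‖x‖ ≤ 1 := (div_le_one hx0).2 hx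
  have hs₀1 : s₀ ≤ 1 := max_le ht1 hCx
  have hs₀t : t ≤ s₀ := le_max_left _ _
  have hs₀pos : 0 < s₀ := lt_of_lt_of_le (div_pos hC hx0) (le_max_right _ _)
  have hs₀C : C ≤ s₀ * ‖x‖ := by
    have := le_max_right t (C / ‖x‖)
    calc C = (C / ‖x‖) * ‖x‖ := by field_simp
    _ ≤ s₀ * ‖x‖ := mul_le_mul_of_nonneg_right this hx0.le
  set A : ℝ := ‖x‖ ^ (1 + ω) / ((1 + ω) * C) with hA_def
  have hA0 : 0 < A := div_pos (Real.rpow_pos_of_pos hx0 _) hωC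
  have hdiff := hΦ.differentiable (by norm_num)
  -- Step A: Φ x - Φ (s₀ • x) ≥ A * (1 - s₀ ^ (1+ω))
  have stepA : A * (1 - s₀ ^ (1 + ω)) ≤ Φ x - Φ (s₀ • x) := by
    set F : ℝ → ℝ := fun s => Φ (s • x) - A * s ^ (1 + ω) with hF_def
    have hasD : ∀ s : ℝ, 0 < s →
        HasDerivAt F (fderiv ℝ Φ (s • x) x - A * ((1 + ω) * s ^ ω)) s := by
      intro s hs
      have h1 : HasDerivAt (fun s : ℝ => s • x) x s := by
        simpa using (hasDerivAt_id s).smul_const x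
      have h2 : HasDerivAt (fun s : ℝ => Φ (s • x)) (fderiv ℝ Φ (s • x) x) s :=
        (hdiff (s • x)).hasFDerivAt.comp_hasDerivAt s h1
      have h3 : HasDerivAt (fun s : ℝ => s ^ (1 + ω)) ((1 + ω) * s ^ (1 + ω - 1)) s :=
        Real.hasDerivAt_rpow_const (Or.inl hs.ne')
      have h3' : HasDerivAt (fun s : ℝ => A * s ^ (1 + ω)) (A * ((1 + ω) * s ^ ω)) s := by
        have := h3.const_mul A
        simpa [add_sub_cancel_left] using this
      exact h2.sub h3'
    have hmono : MonotoneOn F (Set.Icc s₀ 1) := by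
      apply monotoneOn_of_deriv_nonneg (convex_Icc _ _)
      · apply ContinuousOn.sub
        · exact (hΦ.continuous.comp (by fun_prop)).continuousOn
        · apply ContinuousOn.mul continuousOn_const
          intro s hs
          exact (Real.continuousAt_rpow_const s (1 + ω)
            (Or.inl (lt_of_lt_of_le hs₀pos hs.1).ne')).continuousWithinAt
      · intro s hs
        rw [interior_Icc] at hs
        exact ((hasD s (lt_trans hs₀pos hs.1)).differentiableAt).differentiableWithinAt
      · intro s hs
        rw [interior_Icc] at hs
        have hspos : 0 < s := lt_trans hs₀pos hs.1
        rw [(hasD s hspos).deriv]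
        have hsx : C ≤ ‖s • x‖ := by
          rw [norm_smul, Real.norm_eq_abs, abs_of_nonneg hspos.le]
          calc C ≤ s₀ * ‖x‖ := hs₀C
          _ ≤ s * ‖x‖ := mul_le_mul_of_nonneg_right hs.1.le hx0.le
        have hIVs := hIV (s • x) hsx
        have hmap : fderiv ℝ Φ (s • x) (s • x) = s * fderiv ℝ Φ (s • x) x := by
          rw [map_smul]; rfl
        have hns : ‖s • x‖ ^ (1 + ω) = s ^ (1 + ω) * ‖x‖ ^ (1 + ω) := by
          rw [norm_smul, Real.norm_eq_abs, abs_of_nonneg hspos.le,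
            Real.mul_rpow hspos.le hx0.le]
        rw [hmap, hns] at hIVs
        have hsplit : s ^ (1 + ω) = s * s ^ ω := by
          rw [Real.rpow_add hspos, Real.rpow_one]
        rw [hsplit, div_le_iff₀ hC] at hIVs
        have h4 : s * (s ^ ω * ‖x‖ ^ (1 + ω)) ≤ s * (fderiv ℝ Φ (s • x) x * C) := by
          nlinarith [hIVs]
        have h5 : s ^ ω * ‖x‖ ^ (1 + ω) ≤ fderiv ℝ Φ (s • x) x * C :=
          le_of_mul_le_mul_left h4 hspos
        have heq : A * ((1 + ω) * s ^ ω) = s ^ ω * ‖x‖ ^ (1 + ω) / C := by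
          rw [hA_def]; field_simp
        have hfin : A * ((1 + ω) * s ^ ω) ≤ fderiv ℝ Φ (s • x) x := by
          rw [heq, div_le_iff₀ hC]; exact h5
        linarith
    have := hmono (Set.left_mem_Icc.2 hs₀1) (Set.right_mem_Icc.2 hs₀1) hs₀1
    simp only [hF_def, Real.one_rpow, one_smul] at this
    linarith
  -- Step B: Φ (s₀ • x) - Φ (t • x) ≥ -2B
  have stepB : -(2 * B) ≤ Φ (s₀ • x) - Φ (t • x) := by
    rcases le_or_gt (C / ‖x‖) t with h | h
    · have : s₀ = t := max_eq_left h
      rw [this]; simp; linarith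
    · have hs₀eq : s₀ = C / ‖x‖ := max_eq_right h.le
      have h1 : s₀ • x ∈ Metric.closedBall (0 : EuclideanSpace ℝ (Fin n)) C := by
        simp only [Metric.mem_closedBall, dist_zero_right, norm_smul, Real.norm_eq_abs,
          abs_of_nonneg hs₀pos.le]
        rw [hs₀eq]; field_simp; exact le_rfl
      have h2 : t • x ∈ Metric.closedBall (0 : EuclideanSpace ℝ (Fin n)) C := by
        simp only [Metric.mem_closedBall, dist_zero_right, norm_smul, Real.norm_eq_abs,
          abs_of_nonneg ht0]
        calc t * ‖x‖ ≤ (C / ‖x‖) * ‖x‖ := mul_le_mul_of_nonneg_right h.le hx0.le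
        _ = C := by field_simp
      have b1 := (abs_le.1 (hB _ h1)).1
      have b2 := (abs_le.1 (hB _ h2)).2
      linarith
  -- Step C + D: A * (1 - s₀ ^ (1+ω)) ≥ c * (r - C)
  have stepCD : c * (r - C) ≤ A * (1 - s₀ ^ (1 + ω)) := by
    have hsexp : s₀ ^ (1 + ω) ≤ s₀ := by
      rcases eq_or_lt_of_le hs₀1 with h | h
      · rw [h]; simp
      · calc s₀ ^ (1 + ω) ≤ s₀ ^ (1:ℝ) :=
            Real.rpow_le_rpow_of_exponent_ge hs₀pos h.le (by linarith)
        _ = s₀ := Real.rpow_one _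
    have h1 : A * (1 - s₀) ≤ A * (1 - s₀ ^ (1 + ω)) := by
      apply mul_le_mul_of_nonneg_left (by linarith) hA0.le
    refine le_trans ?_ h1
    -- A * (1 - s₀) = ‖x‖^ω/((1+ω)C) * ((1-s₀)‖x‖) ≥ C^ω/((1+ω)C) * (r - C)
    have hxsplit : ‖x‖ ^ (1 + ω) = ‖x‖ * ‖x‖ ^ ω := by
      rw [Real.rpow_add hx0, Real.rpow_one]
    have hs₀x : r - C ≤ (1 - s₀) * ‖x‖ := by
      have hmeq : s₀ * ‖x‖ = max (t * ‖x‖) C := by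
        rw [hs₀_def, max_mul_of_nonneg _ _ hx0.le]
        congr 1
        field_simp
      have hmax : s₀ * ‖x‖ ≤ t * ‖x‖ + C := by
        rw [hmeq]
        exact max_le (le_add_of_nonneg_right hC.le)
          (le_add_of_nonneg_left (mul_nonneg ht0 hx0.le))
      have e1 : r - C = ‖x‖ - t * ‖x‖ - C := by rw [hr_def]; ring
      have e2 : (1 - s₀) * ‖x‖ = ‖x‖ - s₀ * ‖x‖ := by ring
      linarith
    have hs₀x0 : 0 ≤ (1 - s₀) * ‖x‖ := mul_nonneg (by linarith) hx0.le
    have hxω : C ^ ω ≤ ‖x‖ ^ ω := Real.rpow_le_rpow hC.le hx hω.le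
    have hCω : 0 ≤ C ^ ω := (Real.rpow_pos_of_pos hC ω).le
    have hmain : C ^ ω * (r - C) ≤ ‖x‖ ^ ω * ((1 - s₀) * ‖x‖) := by
      rcases le_or_gt 0 (r - C) with h | h
      · exact mul_le_mul hxω hs₀x h (le_trans hCω hxω)
      · calc C ^ ω * (r - C) ≤ 0 := mul_nonpos_of_nonneg_of_nonpos hCω h.le
        _ ≤ ‖x‖ ^ ω * ((1 - s₀) * ‖x‖) :=
          mul_nonneg (le_trans hCω hxω) hs₀x0
    rw [hc_def, hA_def, hxsplit]
    rw [div_mul_eq_mul_div, div_mul_eq_mul_div, div_le_div_iff₀ hωC hωC]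
    calc C ^ ω * (r - C) * ((1 + ω) * C) ≤ ‖x‖ ^ ω * ((1 - s₀) * ‖x‖) * ((1 + ω) * C) := by
          apply mul_le_mul_of_nonneg_right hmain hωC.le
    _ = ‖x‖ * ‖x‖ ^ ω * (1 - s₀) * ((1 + ω) * C) := by ring
  -- combine: Φ x - Φ (t • x) ≥ c * r - (c * C + 2 * B)
  have hD : c * r - (c * C + 2 * B) ≤ Φ x - Φ (t • x) := by
    have := le_trans stepCD stepA
    nlinarith [stepB]
  -- final estimate
  rw [hnorm]
  have hbase : (1 + r ^ 2 : ℝ) ^ ((k : ℝ) / 2) ≤ (1 + r) ^ k := by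
    have h1 : (1 + r ^ 2 : ℝ) ≤ (1 + r) ^ 2 := by nlinarith
    have h2 : (1 + r ^ 2 : ℝ) ^ ((k : ℝ) / 2) ≤ ((1 + r) ^ 2) ^ ((k : ℝ) / 2) :=
      Real.rpow_le_rpow (by positivity) h1 (by positivity)
    refine h2.trans_eq ?_
    rw [← Real.rpow_natCast (1 + r) 2, ← Real.rpow_mul (by linarith), ← Real.rpow_natCast (1 + r) k]
    congr 1
    push_cast
    ring
  have hpoly : (1 + r) ^ k ≤ ε⁻¹ ^ k * Real.exp (c * r / 2) := by
    have h1 : 1 + r ≤ ε⁻¹ * Real.exp (ε * r) := by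
      have h2 : ε * (1 + r) ≤ Real.exp (ε * r) := by
        calc ε * (1 + r) = ε + ε * r := by ring
        _ ≤ 1 + ε * r := by linarith
        _ ≤ Real.exp (ε * r) := Real.add_one_le_exp _ |>.trans_eq' (by ring)
      calc 1 + r = ε⁻¹ * (ε * (1 + r)) := by field_simp
      _ ≤ ε⁻¹ * Real.exp (ε * r) := mul_le_mul_of_nonneg_left h2 (by positivity)
    calc (1 + r) ^ k ≤ (ε⁻¹ * Real.exp (ε * r)) ^ k :=
        pow_le_pow_left₀ (by linarith) h1 k
    _ = ε⁻¹ ^ k * Real.exp (ε * r) ^ k := mul_pow _ _ _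
    _ = ε⁻¹ ^ k * Real.exp ((k : ℝ) * (ε * r)) := by rw [← Real.exp_nat_mul]
    _ ≤ ε⁻¹ ^ k * Real.exp (c * r / 2) := by
        apply mul_le_mul_of_nonneg_left _ (by positivity)
        apply Real.exp_le_exp.2
        calc (k : ℝ) * (ε * r) = ((k : ℝ) * ε) * r := by ring
        _ ≤ (c / 2) * r := mul_le_mul_of_nonneg_right hεk hr0
        _ = c * r / 2 := by ring
  have hexp : Real.exp (-(Φ x - Φ (t • x)) / 2) ≤
      Real.exp ((c * C + 2 * B) / 2) * Real.exp (-(c * r) / 2) := by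
    rw [← Real.exp_add]
    apply Real.exp_le_exp.2
    linarith
  calc (1 + r ^ 2 : ℝ) ^ ((k : ℝ) / 2) * Real.exp (-(Φ x - Φ (t • x)) / 2)
      ≤ (ε⁻¹ ^ k * Real.exp (c * r / 2)) *
        (Real.exp ((c * C + 2 * B) / 2) * Real.exp (-(c * r) / 2)) := by
        apply mul_le_mul (hbase.trans hpoly) hexp (Real.exp_pos _).le (by positivity)
  _ = ε⁻¹ ^ k * Real.exp ((c * C + 2 * B) / 2) * (Real.exp (c * r / 2) * Real.exp (-(c * r) / 2)) := by
        ring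
  _ = ε⁻¹ ^ k * Real.exp ((c * C + 2 * B) / 2) := by
        have h0 : c * r / 2 + -(c * r) / 2 = 0 := by ring
        rw [← Real.exp_add, h0, Real.exp_zero, mul_one]
end

section
/- Let H be a complex Hilbert space and A : H → H a bounded self-adjoint operator which is invertible and satisfies Re⟨Aw, w⟩ ≥ c‖w‖² for some c > 0 and all w ∈ H. Then for every v ∈ H, ⟨A⁻¹v, v⟩ = sup { |⟨v, w⟩|² / ⟨Aw, w⟩ : w ∈ H, w ≠ 0 }; moreover |⟨v, w⟩|² ≤ ⟨A⁻¹v, v⟩ · ⟨Aw, w⟩ for all v, w ∈ H, with equality when v = Aw. -/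
open scoped ComplexInnerProductSpace

/-- if `A` is a bounded self-adjoint invertible operator on a complex Hilbert
space with `Re⟨Aw, w⟩ ≥ c‖w‖²` for some `c > 0` (with two-sided inverse `B = A⁻¹`), then
`⟨A⁻¹v, v⟩ = sup { |⟨v,w⟩|²/⟨Aw,w⟩ : w ≠ 0 }`, and `|⟨v,w⟩|² ≤ ⟨A⁻¹v,v⟩⟨Aw,w⟩` for all `v, w`,
with equality when `v = Aw`. -/
theorem stmt18 {H : Type*} [NormedAddCommGroup H] [InnerProductSpace ℂ H] [CompleteSpace H]
    (A B : H →L[ℂ] H) (hA : IsSelfAdjoint A)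
    (hAB : A.comp B = ContinuousLinearMap.id ℂ H)
    (hBA : B.comp A = ContinuousLinearMap.id ℂ H)
    (c : ℝ) (hc : 0 < c) (hlb : ∀ w : H, c * ‖w‖ ^ 2 ≤ (⟪A w, w⟫).re) :
    (∀ v : H, (⟪B v, v⟫).re =
      sSup {r : ℝ | ∃ w : H, w ≠ 0 ∧ r = ‖(⟪v, w⟫ : ℂ)‖ ^ 2 / (⟪A w, w⟫).re}) ∧
    (∀ v w : H, ‖(⟪v, w⟫ : ℂ)‖ ^ 2 ≤ (⟪B v, v⟫).re * (⟪A w, w⟫).re) ∧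
    (∀ w : H, ‖(⟪A w, w⟫ : ℂ)‖ ^ 2 = (⟪B (A w), A w⟫).re * (⟪A w, w⟫).re) := by
  -- Basic facts
  have hABx : ∀ x : H, A (B x) = x := fun x => congrFun (congrArg DFunLike.coe hAB) x
  have hBAx : ∀ x : H, B (A x) = x := fun x => congrFun (congrArg DFunLike.coe hBA) x
  have hsym : ∀ x y : H, (⟪A x, y⟫ : ℂ) = ⟪x, A y⟫ := by
    intro x y
    conv_lhs => rw [← hA.adjoint_eq]
    exact ContinuousLinearMap.adjoint_inner_left A y x
  have reSym : ∀ x y : H, (⟪x, y⟫ : ℂ).re = (⟪y, x⟫ : ℂ).re := by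
    intro x y
    rw [← inner_conj_symm x y]
    exact Complex.conj_re _
  -- the sesquilinear form `⟪A x, y⟫` is a pre-inner-product
  letI core : PreInnerProductSpace.Core ℂ H :=
    { inner := fun x y => ⟪A x, y⟫
      conj_inner_symm := by
        intro x y
        show _ = _
        rw [inner_conj_symm]
        exact (hsym x y).symm
      re_inner_nonneg := by
        intro x
        exact le_trans (by positivity) (hlb x)
      add_left := by intro x y z; simp [inner_add_left]
      smul_left := by intro x y r; simp [inner_smul_left]; ring }
  have CS := fun x y : H => InnerProductSpace.Core.inner_mul_inner_self_le (𝕜 := ℂ) (c := core) x y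
  -- CS : ‖⟪A x, y⟫‖ * ‖⟪A y, x⟫‖ ≤ (⟪A x, x⟫).re * (⟪A y, y⟫).re
  have hconjAB : ∀ x y : H, (⟪A y, x⟫ : ℂ) = starRingEnd ℂ ⟪A x, y⟫ := by
    intro x y
    rw [← inner_conj_symm, hsym]
  have key : ∀ v w : H, ‖(⟪v, w⟫ : ℂ)‖ ^ 2 ≤ (⟪B v, v⟫).re * (⟪A w, w⟫).re := by
    intro v w
    have h := CS (B v) w
    have h1 : (⟪A (B v), w⟫ : ℂ) = ⟪v, w⟫ := by rw [hABx]
    have h2 : (⟪A w, B v⟫ : ℂ) = starRingEnd ℂ ⟪v, w⟫ := by rw [hconjAB, hABx]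
    have h3 : (⟪A (B v), B v⟫ : ℂ).re = (⟪B v, v⟫ : ℂ).re := by
      rw [hABx]; exact reSym v (B v)
    -- unfold the core inner product in h
    change ‖(⟪A (B v), w⟫ : ℂ)‖ * ‖(⟪A w, B v⟫ : ℂ)‖ ≤
      (⟪A (B v), B v⟫ : ℂ).re * (⟪A w, w⟫ : ℂ).re at h
    rw [h1, h2, h3, RCLike.norm_conj] at h
    rw [pow_two]
    exact h
  have hreal : ∀ w : H, (⟪A w, w⟫ : ℂ).im = 0 := by
    intro w
    have h := congrArg Complex.im (hconjAB w w)
    simp only [Complex.conj_im] at h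
    linarith
  have hnormsq : ∀ w : H, ‖(⟪A w, w⟫ : ℂ)‖ ^ 2 = (⟪A w, w⟫).re ^ 2 := by
    intro w
    rw [Complex.sq_norm, Complex.normSq_apply, hreal]
    ring
  have hpos : ∀ w : H, w ≠ 0 → 0 < (⟪A w, w⟫).re := by
    intro w hw
    have hw2 : 0 < c * ‖w‖ ^ 2 := mul_pos hc (pow_pos (norm_pos_iff.mpr hw) 2)
    linarith [hlb w]
  refine ⟨?_, key, ?_⟩
  · intro v
    set S : Set ℝ := {r : ℝ | ∃ w : H, w ≠ 0 ∧ r = ‖(⟪v, w⟫ : ℂ)‖ ^ 2 / (⟪A w, w⟫).re} with hS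
    have hub : ∀ r ∈ S, r ≤ (⟪B v, v⟫).re := by
      rintro r ⟨w, hw, rfl⟩
      rw [div_le_iff₀ (hpos w hw)]
      exact key v w
    by_cases hv : v = 0
    · subst hv
      have hBv : B (0 : H) = 0 := map_zero B
      have hz : ∀ r ∈ S, r = 0 := by
        rintro r ⟨w, hw, rfl⟩
        simp
      rw [hBv, inner_zero_left, Complex.zero_re]
      by_cases hne : S.Nonempty
      · obtain ⟨r, hr⟩ := hne
        have h0 : (0 : ℝ) ∈ S := hz r hr ▸ hr
        refine le_antisymm (le_csSup ⟨0, fun x hx => le_of_eq (hz x hx)⟩ h0) ?_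
        exact csSup_le ⟨0, h0⟩ fun x hx => le_of_eq (hz x hx)
      · rw [Set.not_nonempty_iff_eq_empty.mp hne, Real.sSup_empty]
    · have hBv : B v ≠ 0 := by
        intro h
        exact hv (by rw [← hABx v, h, map_zero])
      have hmem : (⟪B v, v⟫).re ∈ S := by
        refine ⟨B v, hBv, ?_⟩
        have h1 : (⟪v, B v⟫ : ℂ) = ⟪A (B v), B v⟫ := by rw [hABx]
        have h2 : (⟪A (B v), B v⟫).re = (⟪B v, v⟫).re := by
          rw [hABx]; exact reSym v (B v)
        have hp : 0 < (⟪A (B v), B v⟫).re := hpos (B v) hBv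
        rw [h1, hnormsq (B v), h2]
        rw [h2] at hp
        rw [sq, mul_div_assoc, div_self (ne_of_gt hp), mul_one]
      exact le_antisymm (le_csSup ⟨(⟪B v, v⟫).re, hub⟩ hmem) (csSup_le ⟨_, hmem⟩ hub)
  · intro w
    have h1 : (⟪B (A w), A w⟫ : ℂ).re = (⟪A w, w⟫).re := by
      rw [hBAx]; exact reSym w (A w)
    rw [h1, hnormsq w, sq]
end
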